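/- arXiv:2106.10032 — 5 statements merged into one kernel-verified Lean document; each statement's English description precedes it below -/
import Mathlib

section
/- Let m ≥ 3 and let A be the m×m real matrix with entries A_{ij} = m/4 − |i−j|/2 for i,j ∈ {1,…,m}. Let B be the m×m matrix with B_{jj} = 2 for all j, B_{j,j+1} = B_{j+1,j} = −1 for 1 ≤ j ≤ m−1, B_{1,m} = B_{m,1} = 1, and all other entries 0 (minus the discrete Laplace operator with antiperiodic boundary condition). Then A·B = I and B·A = I; in particular A is invertible with A⁻¹ = B. -/
private lemma sum3' {m : ℕ} (f : Fin m → ℝ) (a b c : Fin m)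
    (hab : a ≠ b) (hac : a ≠ c) (hbc : b ≠ c)
    (h : ∀ k, k ≠ a → k ≠ b → k ≠ c → f k = 0) :
    ∑ k, f k = f a + f b + f c := by
  have hsub : ∑ k, f k = ∑ k ∈ ({a, b, c} : Finset (Fin m)), f k := by
    refine (Finset.sum_subset (Finset.subset_univ _) ?_).symm
    intro k _ hk
    simp only [Finset.mem_insert, Finset.mem_singleton, not_or] at hk
    exact h k hk.1 hk.2.1 hk.2.2
  rw [hsub, Finset.sum_insert (by simp [hab, hac]),
    Finset.sum_insert (by simp [hbc]), Finset.sum_singleton]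
  ring

private lemma absnn (a b : ℕ) (h : b ≤ a) : |((a:ℕ):ℝ) - ((b:ℕ):ℝ)| = (a:ℝ) - b :=
  abs_of_nonneg (sub_nonneg.2 (by exact_mod_cast h))

private lemma absnp (a b : ℕ) (h : a ≤ b) : |((a:ℕ):ℝ) - ((b:ℕ):ℝ)| = (b:ℝ) - a := by
  rw [abs_sub_comm]; exact absnn b a h

/-- The inverse of the matrix `A` with entries `A i j = m/4 - |i - j|/2` is minus the
discrete Laplace operator with antiperiodic boundary conditions. -/
theorem stmt_0 (m : ℕ) (hm : 3 ≤ m) (A B : Matrix (Fin m) (Fin m) ℝ)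
    (hA : ∀ i j : Fin m, A i j = (m : ℝ) / 4 - |((i : ℕ) : ℝ) - ((j : ℕ) : ℝ)| / 2)
    (hB : ∀ i j : Fin m, B i j =
      if (i : ℕ) = (j : ℕ) then 2
      else if (i : ℕ) + 1 = (j : ℕ) ∨ (j : ℕ) + 1 = (i : ℕ) then -1
      else if ((i : ℕ) = 0 ∧ (j : ℕ) = m - 1) ∨ ((j : ℕ) = 0 ∧ (i : ℕ) = m - 1) then 1
      else 0) :
    A * B = 1 ∧ B * A = 1 ∧ A⁻¹ = B := by
  have hBA : B * A = 1 := by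
    ext i j
    rw [Matrix.mul_apply, Matrix.one_apply]
    have him : (i:ℕ) < m := i.isLt
    have hjm : (j:ℕ) < m := j.isLt
    by_cases h0 : (i:ℕ) = 0
    · -- first row
      obtain ⟨b1, hb1⟩ : ∃ k : Fin m, (k:ℕ) = 1 := ⟨⟨1, by omega⟩, rfl⟩
      obtain ⟨bm, hbm⟩ : ∃ k : Fin m, (k:ℕ) = m - 1 := ⟨⟨m-1, by omega⟩, rfl⟩
      have key : ∑ k, B i k * A k j = B i i * A i j + B i b1 * A b1 j + B i bm * A bm j := by
        refine sum3' (fun k => B i k * A k j) i b1 bm ?_ ?_ ?_ ?_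
        · simp only [ne_eq, Fin.ext_iff]; omega
        · simp only [ne_eq, Fin.ext_iff]; omega
        · simp only [ne_eq, Fin.ext_iff]; omega
        · intro k hk1 hk2 hk3
          simp only [ne_eq, Fin.ext_iff] at hk1 hk2 hk3
          show B i k * A k j = 0
          rw [hB, if_neg (by omega), if_neg (by omega), if_neg (by omega), zero_mul]
      have vB1 : B i i = 2 := by rw [hB, if_pos rfl]
      have vB2 : B i b1 = -1 := by rw [hB, if_neg (by omega), if_pos (by omega)]
      have vB3 : B i bm = 1 := by
        rw [hB, if_neg (by omega), if_neg (by omega), if_pos (by omega)]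
      have r0 : ((i:ℕ):ℝ) = 0 := by exact_mod_cast h0
      have r1 : ((b1:ℕ):ℝ) = 1 := by exact_mod_cast hb1
      have rm : ((bm:ℕ):ℝ) + 1 = (m:ℝ) := by exact_mod_cast (by omega : (bm:ℕ) + 1 = m)
      rw [key, vB1, vB2, vB3, hA i j, hA b1 j, hA bm j]
      by_cases hij : i = j
      · have hq : (i:ℕ) = (j:ℕ) := congrArg Fin.val hij
        rw [if_pos hij, absnn (i:ℕ) (j:ℕ) (by omega), absnn (b1:ℕ) (j:ℕ) (by omega),
          absnn (bm:ℕ) (j:ℕ) (by omega)]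
        have rq : ((j:ℕ):ℝ) = 0 := by exact_mod_cast (by omega : (j:ℕ) = 0)
        linarith
      · have hq : (i:ℕ) ≠ (j:ℕ) := fun h => hij (Fin.ext h)
        rw [if_neg hij, absnp (i:ℕ) (j:ℕ) (by omega), absnp (b1:ℕ) (j:ℕ) (by omega),
          absnn (bm:ℕ) (j:ℕ) (by omega)]
        linarith
    · by_cases h1 : (i:ℕ) = m - 1
      · -- last row
        obtain ⟨b0, hb0⟩ : ∃ k : Fin m, (k:ℕ) = 0 := ⟨⟨0, by omega⟩, rfl⟩
        obtain ⟨b2, hb2⟩ : ∃ k : Fin m, (k:ℕ) = m - 2 := ⟨⟨m-2, by omega⟩, rfl⟩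
        have key : ∑ k, B i k * A k j
            = B i b0 * A b0 j + B i b2 * A b2 j + B i i * A i j := by
          refine sum3' (fun k => B i k * A k j) b0 b2 i ?_ ?_ ?_ ?_
          · simp only [ne_eq, Fin.ext_iff]; omega
          · simp only [ne_eq, Fin.ext_iff]; omega
          · simp only [ne_eq, Fin.ext_iff]; omega
          · intro k hk1 hk2 hk3
            have hkm : (k:ℕ) < m := k.isLt
            simp only [ne_eq, Fin.ext_iff] at hk1 hk2 hk3
            show B i k * A k j = 0
            rw [hB, if_neg (by omega), if_neg (by omega), if_neg (by omega), zero_mul]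
        have vB1 : B i b0 = 1 := by
          rw [hB, if_neg (by omega), if_neg (by omega), if_pos (by omega)]
        have vB2 : B i b2 = -1 := by rw [hB, if_neg (by omega), if_pos (by omega)]
        have vB3 : B i i = 2 := by rw [hB, if_pos rfl]
        have r0 : ((b0:ℕ):ℝ) = 0 := by exact_mod_cast hb0
        have r2 : ((b2:ℕ):ℝ) + 2 = (m:ℝ) := by exact_mod_cast (by omega : (b2:ℕ) + 2 = m)
        have ri : ((i:ℕ):ℝ) + 1 = (m:ℝ) := by exact_mod_cast (by omega : (i:ℕ) + 1 = m)
        rw [key, vB1, vB2, vB3, hA b0 j, hA b2 j, hA i j]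
        by_cases hij : i = j
        · have hq : (i:ℕ) = (j:ℕ) := congrArg Fin.val hij
          rw [if_pos hij, absnp (b0:ℕ) (j:ℕ) (by omega), absnp (b2:ℕ) (j:ℕ) (by omega),
            absnn (i:ℕ) (j:ℕ) (by omega)]
          have rq : ((j:ℕ):ℝ) + 1 = (m:ℝ) := by exact_mod_cast (by omega : (j:ℕ) + 1 = m)
          linarith
        · have hq : (i:ℕ) ≠ (j:ℕ) := fun h => hij (Fin.ext h)
          rw [if_neg hij, absnp (b0:ℕ) (j:ℕ) (by omega), absnn (b2:ℕ) (j:ℕ) (by omega),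
            absnn (i:ℕ) (j:ℕ) (by omega)]
          linarith
      · -- interior row
        obtain ⟨bp, hbp⟩ : ∃ k : Fin m, (k:ℕ) = (i:ℕ) - 1 := ⟨⟨(i:ℕ)-1, by omega⟩, rfl⟩
        obtain ⟨bn, hbn⟩ : ∃ k : Fin m, (k:ℕ) = (i:ℕ) + 1 := ⟨⟨(i:ℕ)+1, by omega⟩, rfl⟩
        have key : ∑ k, B i k * A k j
            = B i bp * A bp j + B i i * A i j + B i bn * A bn j := by
          refine sum3' (fun k => B i k * A k j) bp i bn ?_ ?_ ?_ ?_
          · simp only [ne_eq, Fin.ext_iff]; omega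
          · simp only [ne_eq, Fin.ext_iff]; omega
          · simp only [ne_eq, Fin.ext_iff]; omega
          · intro k hk1 hk2 hk3
            simp only [ne_eq, Fin.ext_iff] at hk1 hk2 hk3
            show B i k * A k j = 0
            rw [hB, if_neg (by omega), if_neg (by omega), if_neg (by omega), zero_mul]
        have vB1 : B i bp = -1 := by rw [hB, if_neg (by omega), if_pos (by omega)]
        have vB2 : B i i = 2 := by rw [hB, if_pos rfl]
        have vB3 : B i bn = -1 := by rw [hB, if_neg (by omega), if_pos (by omega)]
        have rp : ((bp:ℕ):ℝ) + 1 = ((i:ℕ):ℝ) := by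
          exact_mod_cast (by omega : (bp:ℕ) + 1 = (i:ℕ))
        have rn : ((bn:ℕ):ℝ) = ((i:ℕ):ℝ) + 1 := by exact_mod_cast hbn
        rw [key, vB1, vB2, vB3, hA bp j, hA i j, hA bn j]
        by_cases hij : i = j
        · have hq : (i:ℕ) = (j:ℕ) := congrArg Fin.val hij
          rw [if_pos hij, absnp (bp:ℕ) (j:ℕ) (by omega), absnn (i:ℕ) (j:ℕ) (by omega),
            absnn (bn:ℕ) (j:ℕ) (by omega)]
          have rq : ((i:ℕ):ℝ) = ((j:ℕ):ℝ) := by exact_mod_cast hq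
          linarith
        · have hq : (i:ℕ) ≠ (j:ℕ) := fun h => hij (Fin.ext h)
          rw [if_neg hij]
          rcases Nat.lt_or_ge (i:ℕ) (j:ℕ) with hlt | hge
          · rw [absnp (bp:ℕ) (j:ℕ) (by omega), absnp (i:ℕ) (j:ℕ) (by omega),
              absnp (bn:ℕ) (j:ℕ) (by omega)]
            linarith
          · rw [absnn (bp:ℕ) (j:ℕ) (by omega), absnn (i:ℕ) (j:ℕ) (by omega),
              absnn (bn:ℕ) (j:ℕ) (by omega)]
            linarith
  have hAB : A * B = 1 := mul_eq_one_comm.mp hBA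
  exact ⟨hAB, hBA, Matrix.inv_eq_right_inv hAB⟩
end

section
/- Let G be a finite simple graph with vertex set V and edge set E, and fix a linear order on V. Then the following are equivalent: (i) there exists an assignment f : E → ℝ with f(e) ≠ 0 for every edge e such that for every vertex v the signed sum over all edges e incident to v of f(e), taken with sign +1 if v is the larger endpoint of e and −1 if v is the smaller endpoint, is zero; (ii) every edge of G lies on a cycle of G. -/
open Finset

/-- The sign of the vertex `v` in the edge `e`: `+1` if `v` is the larger endpoint of `e`,
`-1` if `v` is the smaller endpoint, and `0` if `v` is not an endpoint of `e`. -/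
noncomputable def edgeSgn {V : Type*} [LinearOrder V] (v : V) : Sym2 V → ℝ :=
  Sym2.lift ⟨fun a b => (if v = max a b then 1 else 0) - (if v = min a b then 1 else 0),
    fun a b => by simp only [max_comm, min_comm]⟩

section Helpers

variable {V : Type*} [LinearOrder V] [DecidableEq V]

lemma edgeSgn_mk (v a b : V) :
    edgeSgn v s(a, b) = (if v = max a b then 1 else 0) - (if v = min a b then 1 else 0) := by
  simp only [edgeSgn, Sym2.lift_mk]
  split_ifs <;> norm_num

lemma edgeSgn_snd {x y : V} (h : x ≠ y) : edgeSgn y s(x, y) = 1 ∨ edgeSgn y s(x, y) = -1 := by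
  rcases h.lt_or_gt with h' | h' <;>
    simp [edgeSgn_mk, max_eq_right h'.le, min_eq_left h'.le, max_eq_left h'.le,
      min_eq_right h'.le, h.symm, h'.ne, h'.ne']

lemma edgeSgn_mul {x y : V} (h : x ≠ y) (v : V) :
    edgeSgn v s(x, y) * edgeSgn y s(x, y) =
      (if v = y then 1 else 0) - (if v = x then 1 else 0) := by
  rcases h.lt_or_gt with h' | h' <;>
    simp [edgeSgn_mk, max_eq_right h'.le, min_eq_left h'.le, max_eq_left h'.le,
      min_eq_right h'.le, h.symm, h'.ne, h'.ne'] <;> ring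

noncomputable def circ {G : SimpleGraph V} {u w : V} (p : G.Walk u w) (e : Sym2 V) : ℝ :=
  (p.darts.map (fun d => if s(d.fst, d.snd) = e then edgeSgn d.snd s(d.fst, d.snd) else 0)).sum

@[simp] lemma circ_nil {G : SimpleGraph V} {u : V} (e : Sym2 V) :
    circ (SimpleGraph.Walk.nil : G.Walk u u) e = 0 := rfl

lemma circ_cons {G : SimpleGraph V} {x y w : V} (h : G.Adj x y) (p : G.Walk y w) (e : Sym2 V) :
    circ (SimpleGraph.Walk.cons h p) e =
      (if s(x, y) = e then edgeSgn y s(x, y) else 0) + circ p e := by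
  simp [circ, SimpleGraph.Walk.darts_cons]

variable [Fintype V]

lemma circ_div {G : SimpleGraph V} [DecidableRel G.Adj] {u w : V} (p : G.Walk u w) (v : V) :
    ∑ e ∈ G.edgeFinset, edgeSgn v e * circ p e =
      (if v = w then 1 else 0) - (if v = u then 1 else 0) := by
  induction p with
  | nil => simp
  | @cons x y w h p ih =>
    simp only [circ_cons, mul_add, Finset.sum_add_distrib, ih]
    have h1 : ∑ e ∈ G.edgeFinset, edgeSgn v e * (if s(x, y) = e then edgeSgn y s(x, y) else 0) =
        edgeSgn v s(x, y) * edgeSgn y s(x, y) := by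
      rw [Finset.sum_eq_single s(x, y)]
      · simp
      · intro b _ hb; simp [Ne.symm hb]
      · intro habs; exact absurd (by rwa [SimpleGraph.mem_edgeFinset, SimpleGraph.mem_edgeSet]) habs
    rw [h1, edgeSgn_mul h.ne]
    ring

lemma circ_trail {G : SimpleGraph V} {u w : V} (p : G.Walk u w) (hp : p.IsTrail) (e : Sym2 V) :
    (circ p e = 0 ∨ circ p e = 1 ∨ circ p e = -1) ∧ (circ p e = 0 ↔ e ∉ p.edges) := by
  induction p with
  | nil => simp
  | @cons x y w h p ih =>
    rw [SimpleGraph.Walk.isTrail_cons] at hp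
    obtain ⟨ht, hne⟩ := hp
    have ih := ih ht
    rw [circ_cons]
    by_cases hxy : s(x, y) = e
    · subst hxy
      have h0 : circ p s(x, y) = 0 := (ih.2).mpr hne
      rw [h0, if_pos rfl, add_zero]
      rcases edgeSgn_snd h.ne with h1 | h1 <;>
        simp [h1, SimpleGraph.Walk.edges_cons]
    · rw [if_neg hxy, zero_add]
      refine ⟨ih.1, ?_⟩
      rw [ih.2, SimpleGraph.Walk.edges_cons, List.mem_cons]
      have hns : ¬ e = s(x, y) := fun h' => hxy h'.symm
      simp [hns]

lemma geomSum_lt_pow (k : ℕ) : ∑ j ∈ Finset.range k, (3:ℝ)^j < 3^k := by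
  induction k with
  | zero => simp
  | succ k ih =>
    rw [Finset.sum_range_succ, pow_succ]
    nlinarith [pow_pos (by norm_num : (0:ℝ) < 3) k]

end Helpers

/-- A nowhere-zero edge assignment with zero signed sum at every vertex exists if and only
if every edge of the graph lies on a cycle. -/
theorem stmt_5 {V : Type*} [Fintype V] [DecidableEq V] [LinearOrder V]
    (G : SimpleGraph V) [DecidableRel G.Adj] :
    (∃ f : Sym2 V → ℝ, (∀ e ∈ G.edgeFinset, f e ≠ 0) ∧
      ∀ v : V, ∑ e ∈ G.edgeFinset, edgeSgn v e * f e = 0) ↔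
    (∀ e ∈ G.edgeSet, ∃ (a : V) (c : G.Walk a a), c.IsCycle ∧ e ∈ c.edges) := by
  classical
  constructor
  · rintro ⟨f, hf0, hdiv⟩ e he
    by_contra hcyc
    push_neg at hcyc
    induction e using Sym2.ind with | _ a b =>
    have hab : G.Adj a b := he
    have hbr : ¬ (G \ SimpleGraph.fromEdgeSet {s(a, b)}).Reachable a b := by
      have : G.IsBridge s(a, b) := by
        rw [SimpleGraph.isBridge_iff_adj_and_forall_cycle_notMem he]
        exact fun u p hp => by
          intro hmem
          exact absurd hp (by simpa using (hcyc u p · hmem))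
      exact (SimpleGraph.isBridge_iff).mp this
    set G' := G \ SimpleGraph.fromEdgeSet {s(a, b)} with hG'
    set S : Finset V := Finset.univ.filter (fun v => G'.Reachable a v) with hS
    have haS : a ∈ S := by
      simp only [hS, Finset.mem_filter, Finset.mem_univ, true_and]
      exact SimpleGraph.Reachable.refl a
    have hbS : b ∉ S := by simp [hS, hbr]
    have hsum : ∀ x y : V, ∑ v ∈ S, edgeSgn v s(x, y) =
        (if max x y ∈ S then 1 else 0) - (if min x y ∈ S then 1 else 0) := by
      intro x y
      simp only [edgeSgn_mk, Finset.sum_sub_distrib]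
      rw [Finset.sum_ite_eq' S (max x y) (fun _ => (1:ℝ)),
        Finset.sum_ite_eq' S (min x y) (fun _ => (1:ℝ))]
    have hzero : ∀ e ∈ G.edgeFinset, e ≠ s(a, b) → ∑ v ∈ S, edgeSgn v e = 0 := by
      intro e hemem hne
      induction e using Sym2.ind with | _ x y =>
      have hxyadj : G.Adj x y := by rwa [SimpleGraph.mem_edgeFinset, SimpleGraph.mem_edgeSet] at hemem
      have hadj' : G'.Adj x y := by
        rw [hG', SimpleGraph.sdiff_adj, SimpleGraph.fromEdgeSet_adj]
        exact ⟨hxyadj, fun h => hne (by simpa using h.1)⟩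
      have hiff : x ∈ S ↔ y ∈ S := by
        simp only [hS, Finset.mem_filter, Finset.mem_univ, true_and]
        exact ⟨fun h => h.trans hadj'.reachable, fun h => h.trans hadj'.symm.reachable⟩
      rw [hsum x y]
      rcases le_total x y with h' | h' <;>
        simp [max_eq_right, max_eq_left, min_eq_left, min_eq_right, h'] <;>
        simp [hiff]
    have key : (∑ v ∈ S, edgeSgn v s(a, b)) * f s(a, b) = 0 := by
      have h0 : ∑ v ∈ S, ∑ e ∈ G.edgeFinset, edgeSgn v e * f e = 0 :=
        Finset.sum_eq_zero fun v _ => hdiv v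
      rw [Finset.sum_comm] at h0
      have h1 : ∑ e ∈ G.edgeFinset, (∑ v ∈ S, edgeSgn v e) * f e = 0 := by
        rw [← h0]
        exact Finset.sum_congr rfl fun e _ => by rw [Finset.sum_mul]
      rw [Finset.sum_eq_single s(a, b)] at h1
      · exact h1
      · intro e hemem hne
        rw [hzero e hemem hne, zero_mul]
      · intro habs
        exact absurd (by rwa [SimpleGraph.mem_edgeFinset, SimpleGraph.mem_edgeSet]) habs
    have hne' : (∑ v ∈ S, edgeSgn v s(a, b)) ≠ 0 := by
      rw [hsum a b]
      rcases (hab.ne).lt_or_gt with h' | h' <;>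
        simp [max_eq_right h'.le, max_eq_left h'.le, min_eq_left h'.le, min_eq_right h'.le,
          haS, hbS]
    exact hf0 s(a, b) (by rwa [SimpleGraph.mem_edgeFinset, SimpleGraph.mem_edgeSet])
      ((mul_eq_zero.mp key).resolve_left hne')
  · intro hcyc
    have hcyc' : ∀ e ∈ G.edgeFinset, ∃ (a : V) (c : G.Walk a a), c.IsCycle ∧ e ∈ c.edges :=
      fun e he => hcyc e (SimpleGraph.mem_edgeFinset.mp he)
    choose av cw hcy hmem using hcyc'
    set ι : Sym2 V → ℕ := fun e => (Fintype.equivFin (Sym2 V) e : ℕ) with hι'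
    have hι : Function.Injective ι := fun e e' h =>
      (Fintype.equivFin (Sym2 V)).injective (Fin.ext h)
    refine ⟨fun e₀ => ∑ e ∈ G.edgeFinset.attach, 3 ^ (ι e.1) * circ (cw e.1 e.2) e₀, ?_, ?_⟩
    · intro e₀ he₀
      set T := G.edgeFinset.attach.filter (fun e => circ (cw e.1 e.2) e₀ ≠ 0) with hT
      have hmemT : (⟨e₀, he₀⟩ : {x // x ∈ G.edgeFinset}) ∈ T := by
        rw [hT, Finset.mem_filter]
        refine ⟨Finset.mem_attach _ _, fun h0 => ?_⟩
        exact ((circ_trail _ (hcy e₀ he₀).isCircuit.isTrail e₀).2.mp h0) (hmem e₀ he₀)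
      obtain ⟨em, hemT, hmax⟩ := T.exists_max_image (fun e => ι e.1) ⟨_, hmemT⟩
      set k := ι em.1 with hk
      have hemA : em ∈ G.edgeFinset.attach := Finset.mem_attach _ _
      have hsplit : ∑ e ∈ G.edgeFinset.attach, 3 ^ (ι e.1) * circ (cw e.1 e.2) e₀ =
          3 ^ k * circ (cw em.1 em.2) e₀ +
            ∑ e ∈ G.edgeFinset.attach.erase em, 3 ^ (ι e.1) * circ (cw e.1 e.2) e₀ :=
        (Finset.add_sum_erase _ _ hemA).symm
      have hcm : circ (cw em.1 em.2) e₀ = 1 ∨ circ (cw em.1 em.2) e₀ = -1 := by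
        have h1 := (circ_trail _ (hcy em.1 em.2).isCircuit.isTrail e₀).1
        have h2 : circ (cw em.1 em.2) e₀ ≠ 0 := (Finset.mem_filter.mp hemT).2
        tauto
      have hmainabs : |3 ^ k * circ (cw em.1 em.2) e₀| = 3 ^ k := by
        rcases hcm with h | h <;> rw [h] <;>
          simp [abs_of_pos, pow_pos, (by norm_num : (0:ℝ) < 3)]
      have hrest : |∑ e ∈ G.edgeFinset.attach.erase em, 3 ^ (ι e.1) * circ (cw e.1 e.2) e₀| <
          3 ^ k := by
        calc |∑ e ∈ G.edgeFinset.attach.erase em, 3 ^ (ι e.1) * circ (cw e.1 e.2) e₀|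
            ≤ ∑ e ∈ G.edgeFinset.attach.erase em, |3 ^ (ι e.1) * circ (cw e.1 e.2) e₀| :=
              Finset.abs_sum_le_sum_abs _ _
          _ ≤ ∑ e ∈ T.erase em, (3:ℝ) ^ (ι e.1) := by
              rw [← Finset.sum_filter_add_sum_filter_not (G.edgeFinset.attach.erase em)
                (fun e => circ (cw e.1 e.2) e₀ ≠ 0)]
              have hTe : (G.edgeFinset.attach.erase em).filter
                  (fun e => circ (cw e.1 e.2) e₀ ≠ 0) = T.erase em := by
                rw [hT, Finset.filter_erase]
              rw [hTe]
              have hz : ∑ e ∈ (G.edgeFinset.attach.erase em).filter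
                  (fun e => ¬ circ (cw e.1 e.2) e₀ ≠ 0), |3 ^ (ι e.1) * circ (cw e.1 e.2) e₀| = 0 := by
                refine Finset.sum_eq_zero fun e hee => ?_
                have : circ (cw e.1 e.2) e₀ = 0 := by
                  have := (Finset.mem_filter.mp hee).2; tauto
                simp [this]
              rw [hz, add_zero]
              refine Finset.sum_le_sum fun e hee => ?_
              have h1 := (circ_trail _ (hcy e.1 e.2).isCircuit.isTrail e₀).1
              rcases h1 with h | h | h <;>
                simp [h, abs_of_pos, pow_pos, le_of_lt, pow_nonneg, (by norm_num : (0:ℝ) ≤ 3),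
                  abs_of_nonneg, pow_nonneg (by norm_num : (0:ℝ) ≤ 3)]
          _ = ∑ j ∈ (T.erase em).image (fun e => ι e.1), (3:ℝ) ^ j := by
              rw [Finset.sum_image]
              intro x _ y _ hxy
              exact Subtype.ext (hι hxy)
          _ ≤ ∑ j ∈ Finset.range k, (3:ℝ) ^ j := by
              refine Finset.sum_le_sum_of_subset_of_nonneg ?_ fun j _ _ =>
                le_of_lt (pow_pos (by norm_num) j)
              intro j hj
              rw [Finset.mem_image] at hj
              obtain ⟨e, hee, rfl⟩ := hj
              rw [Finset.mem_range]
              have h1 : e ∈ T := Finset.mem_of_mem_erase hee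
              have h2 : e ≠ em := Finset.ne_of_mem_erase hee
              have h3 : ι e.1 ≤ k := hmax e h1
              rcases h3.lt_or_eq with h | h
              · exact h
              · exact absurd (Subtype.ext (hι h)) h2
          _ < 3 ^ k := geomSum_lt_pow k
      intro h0
      beta_reduce at h0
      rw [hsplit] at h0
      have := hmainabs
      rw [show 3 ^ k * circ (cw em.1 em.2) e₀ =
        -∑ e ∈ G.edgeFinset.attach.erase em, 3 ^ (ι e.1) * circ (cw e.1 e.2) e₀ by linarith] at this
      rw [abs_neg] at this
      linarith [hrest]
    · intro v
      have hterm : ∀ (e : {x // x ∈ G.edgeFinset}),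
          ∑ e₀ ∈ G.edgeFinset, edgeSgn v e₀ * (3 ^ (ι e.1) * circ (cw e.1 e.2) e₀) = 0 := by
        intro e
        have hd := circ_div (cw e.1 e.2) v
        calc ∑ e₀ ∈ G.edgeFinset, edgeSgn v e₀ * (3 ^ (ι e.1) * circ (cw e.1 e.2) e₀)
            = 3 ^ (ι e.1) * ∑ e₀ ∈ G.edgeFinset, edgeSgn v e₀ * circ (cw e.1 e.2) e₀ := by
              rw [Finset.mul_sum]; exact Finset.sum_congr rfl fun _ _ => by ring
          _ = 0 := by rw [hd]; ring
      simp only [Finset.mul_sum]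
      rw [Finset.sum_comm]
      exact Finset.sum_eq_zero fun e _ => hterm e
end

section
/- Call a subgraph H of a simple graph a merger generator if H is either (a) a cycle of even length, or (b) the union of two odd cycles that share exactly one vertex and no edges, or (c) the union of two vertex-disjoint odd cycles together with a path joining a vertex of one cycle to a vertex of the other and meeting the two cycles only in its endpoints. Let G be a finite simple graph with edge set E. Then the following are equivalent: (i) there exists an assignment f : E → ℝ with f(e) ≠ 0 for every edge e such that for every vertex v the (unsigned) sum of f(e) over all edges e incident to v is zero; (ii) every edge of G belongs to a subgraph of G that is a merger generator. -/
open Finset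

/-- The edge `e` lies on an even cycle of `G`. -/
def LiesOnEvenCycle {V : Type*} (G : SimpleGraph V) (e : Sym2 V) : Prop :=
  ∃ (a : V) (c : G.Walk a a), c.IsCycle ∧ Even c.length ∧ e ∈ c.edges

/-- The edge `e` lies on a subgraph of `G` which is the union of two odd cycles sharing
exactly one vertex and no edges. -/
def LiesOnTwoOddCyclesSharingAVertex {V : Type*} (G : SimpleGraph V) (e : Sym2 V) : Prop :=
  ∃ (a : V) (c₁ c₂ : G.Walk a a), c₁.IsCycle ∧ c₂.IsCycle ∧
    Odd c₁.length ∧ Odd c₂.length ∧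
    (∀ x : V, x ∈ c₁.support → x ∈ c₂.support → x = a) ∧
    (∀ e' : Sym2 V, e' ∈ c₁.edges → e' ∉ c₂.edges) ∧
    (e ∈ c₁.edges ∨ e ∈ c₂.edges)

/-- The edge `e` lies on a subgraph of `G` which is the union of two vertex-disjoint odd
cycles together with a path joining a vertex of one cycle to a vertex of the other and
meeting the two cycles only in its endpoints. -/
def LiesOnTwoOddCyclesJoinedByAPath {V : Type*} (G : SimpleGraph V) (e : Sym2 V) : Prop :=
  ∃ (a b : V) (c₁ : G.Walk a a) (c₂ : G.Walk b b) (p : G.Walk a b),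
    c₁.IsCycle ∧ c₂.IsCycle ∧ Odd c₁.length ∧ Odd c₂.length ∧ p.IsPath ∧
    (∀ x : V, x ∈ c₁.support → x ∉ c₂.support) ∧
    (∀ x : V, x ∈ p.support → x ∈ c₁.support → x = a) ∧
    (∀ x : V, x ∈ p.support → x ∈ c₂.support → x = b) ∧
    (e ∈ c₁.edges ∨ e ∈ c₂.edges ∨ e ∈ p.edges)

namespace MergerAux

open SimpleGraph Walk

set_option linter.unusedSectionVars false
set_option maxHeartbeats 1000000

section Lists

/-- Sign alternation along a chain of nonzero reals. -/
lemma alt_sign : ∀ (l : List ℝ), l.Chain' (fun x y => x * y < 0) → (∀ x ∈ l, x ≠ 0) →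
    ∀ (hl : l ≠ []), 0 < l.head hl * l.getLast hl * (-1) ^ (l.length + 1)
  | [], _, _, hl => absurd rfl hl
  | [a], _, hnz, _ => by
      have ha : a ≠ 0 := hnz a (by simp)
      simpa using mul_self_pos.mpr ha
  | a :: b :: t, hch, hnz, hne => by
      change List.IsChain _ _ at hch; rw [List.isChain_cons_cons] at hch
      have ih := alt_sign (b :: t) hch.2 (fun x hx => hnz x (by simp [hx])) (List.cons_ne_nil _ _)
      have hb : b ≠ 0 := hnz b (by simp)
      have hL : (b :: t).getLast (List.cons_ne_nil _ _) ≠ 0 := hnz _ (List.mem_cons_of_mem a (List.getLast_mem (List.cons_ne_nil _ _)))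
      set L := (b :: t).getLast (List.cons_ne_nil _ _) with hLdef
      have hlast : (a :: b :: t).getLast hne = L := by
        rw [hLdef]; exact List.getLast_cons (List.cons_ne_nil _ _)
      rw [List.head_cons, hlast]
      rw [List.head_cons] at ih
      set s : ℝ := (-1 : ℝ) ^ ((b :: t).length + 1) with hs
      have hss : s * s = 1 := by
        rw [hs, ← pow_add]
        exact Even.neg_one_pow ⟨(b :: t).length + 1, rfl⟩
      have hlen : (a :: b :: t).length + 1 = ((b :: t).length + 1) + 1 := by simp
      rw [hlen, pow_succ, ← hs]
      have h1 : a * b * (b * L * s) < 0 := mul_neg_of_neg_of_pos hch.1 ih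
      nlinarith [mul_self_pos.mpr hb, mul_self_pos.mpr hL, hss, h1]

lemma exists_max_nat (S : Set ℕ) (hne : S.Nonempty) (B : ℕ) (hB : ∀ n ∈ S, n ≤ B) :
    ∃ m ∈ S, ∀ n ∈ S, n ≤ m := by
  have hbdd : BddAbove S := ⟨B, fun n hn => hB n hn⟩
  exact ⟨sSup S, Nat.sSup_mem hne hbdd, fun n hn => le_csSup hbdd hn⟩

end Lists

section Graphs

variable {V : Type*} [DecidableEq V] {G : SimpleGraph V}

lemma mem_support_of_mem_edges' {u v a : V} {p : G.Walk u v} {e : Sym2 V}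
    (he : e ∈ p.edges) (ha : a ∈ e) : a ∈ p.support := by
  induction e with
  | _ x y =>
    rcases Sym2.mem_iff.mp ha with rfl | rfl
    · exact p.fst_mem_support_of_mem_edges he
    · exact p.snd_mem_support_of_mem_edges he

/-- In a path, any edge containing the start vertex is the first edge. -/
lemma edge_head_of_isPath {a b x : V} {h : G.Adj a x} {q : G.Walk x b}
    (hp : (Walk.cons h q).IsPath) {e : Sym2 V}
    (he : e ∈ (Walk.cons h q).edges) (ha : a ∈ e) : e = s(a, x) := by
  rw [Walk.edges_cons, List.mem_cons] at he
  rcases he with he | he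
  · exact he
  · exact absurd (mem_support_of_mem_edges' he ha)
      ((Walk.cons_isPath_iff h q).mp hp).2

/-- A path from `a` to `b` containing the edge `s(a,b)` has length 1. -/
lemma length_eq_one_of_mem_edges {a b : V} {p : G.Walk a b} (hp : p.IsPath)
    (he : s(a, b) ∈ p.edges) : p.length = 1 := by
  cases p with
  | nil => simp at he
  | @cons _ x _ h q =>
    have h1 := edge_head_of_isPath hp he (Sym2.mem_mk_left a b)
    have hbx : b = x := by
      rw [Sym2.eq_iff] at h1
      rcases h1 with ⟨-, rfl⟩ | ⟨rfl, rfl⟩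
      · rfl
      · exact absurd rfl h.ne
    subst hbx
    have : q = Walk.nil := Walk.isPath_iff_eq_nil.mp ((Walk.cons_isPath_iff h q).mp hp).1
    subst this
    rfl

/-- Gluing two internally disjoint paths into a cycle. -/
lemma glue_isCycle {a b : V} {p : G.Walk a b} {q : G.Walk b a} (hp : p.IsPath) (hq : q.IsPath)
    (hab : a ≠ b)
    (hmeet : ∀ x, x ∈ p.support → x ∈ q.support → x = a ∨ x = b)
    (hlen : 3 ≤ p.length + q.length) : (p.append q).IsCycle := by
  have hpt : a ∉ p.support.tail := by
    have := hp.support_nodup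
    rw [p.support_eq_cons] at this
    exact (List.nodup_cons.mp this).1
  have hqt : b ∉ q.support.tail := by
    have := hq.support_nodup
    rw [q.support_eq_cons] at this
    exact (List.nodup_cons.mp this).1
  rw [Walk.isCycle_def]
  refine ⟨?_, ?_, ?_⟩
  · -- IsTrail
    rw [Walk.isTrail_def, Walk.edges_append, List.nodup_append]
    refine ⟨hp.isTrail.edges_nodup, hq.isTrail.edges_nodup, ?_⟩
    rintro e hep _ heq rfl
    -- e has both endpoints in both supports
    induction e with
    | _ x y =>
      have hxy : x ≠ y := (p.adj_of_mem_edges hep).ne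
      have hx1 := p.fst_mem_support_of_mem_edges hep
      have hy1 := p.snd_mem_support_of_mem_edges hep
      have hx2 := q.fst_mem_support_of_mem_edges heq
      have hy2 := q.snd_mem_support_of_mem_edges heq
      have hx := hmeet x hx1 hx2
      have hy := hmeet y hy1 hy2
      have heab : s(x, y) = s(a, b) := by
        rcases hx with rfl | rfl <;> rcases hy with rfl | rfl
        · exact absurd rfl hxy
        · rfl
        · exact Sym2.eq_swap
        · exact absurd rfl hxy
      rw [heab] at hep heq
      have l1 := length_eq_one_of_mem_edges hp hep
      have l2 := length_eq_one_of_mem_edges hq.reverse (by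
        rw [Walk.edges_reverse, List.mem_reverse]
        exact (Sym2.eq_swap (a := b) (b := a)) ▸ heq)
      rw [Walk.length_reverse] at l2
      omega
  · -- ≠ nil
    intro hn
    have := congrArg Walk.length hn
    rw [Walk.length_append] at this
    simp only [Walk.length_nil] at this
    omega
  · -- support tail nodup
    rw [Walk.tail_support_append, List.nodup_append]
    refine ⟨hp.support_nodup.sublist (List.tail_sublist _), 
      hq.support_nodup.sublist (List.tail_sublist _), ?_⟩
    rintro x hx1 _ hx2 rfl
    have hx1' : x ∈ p.support := List.mem_of_mem_tail hx1
    have hx2' : x ∈ q.support := List.mem_of_mem_tail hx2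
    rcases hmeet x hx1' hx2' with rfl | rfl
    · exact hpt hx1
    · exact hqt hx2

/-- takeUntil and dropUntil of a cycle at a non-base vertex are paths. -/
lemma cycle_split_isPath {z w : V} {c : G.Walk z z} (hc : c.IsCycle) (hw : w ∈ c.support)
    (hne : w ≠ z) : (c.takeUntil w hw).IsPath ∧ (c.dropUntil w hw).IsPath := by
  set T := c.takeUntil w hw with hT
  set D := c.dropUntil w hw with hD
  have hspec : T.append D = c := c.take_spec hw
  have hsupp : T.support ++ D.support.tail = c.support := by
    rw [← Walk.support_append, hspec]
  have hctail : c.support = z :: c.support.tail := c.support_eq_cons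
  have hTtail : T.support = z :: T.support.tail := T.support_eq_cons
  have htails : T.support.tail ++ D.support.tail = c.support.tail := by
    have : (z :: T.support.tail) ++ D.support.tail = z :: c.support.tail := by
      rw [← hTtail, hsupp, ← hctail]
    rw [List.cons_append] at this; exact (List.cons.inj this).2
  have hnd : (T.support.tail ++ D.support.tail).Nodup := by
    rw [htails]; exact hc.2
  rw [List.nodup_append] at hnd
  have hzD : z ∈ D.support.tail := by
    have hz : z ∈ D.support := D.end_mem_support
    rw [D.support_eq_cons] at hz
    rcases hz with _ | hz
    · exact absurd rfl hne
    · assumption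
  have hwT : w ∈ T.support.tail := by
    have hz : w ∈ T.support := T.end_mem_support
    rw [hTtail] at hz
    rcases hz with _ | hz
    · exact absurd rfl hne
    · assumption
  constructor
  · rw [Walk.isPath_def, hTtail, List.nodup_cons]
    exact ⟨fun hzT => hnd.2.2 _ hzT _ hzD rfl, hnd.1⟩
  · rw [Walk.isPath_def, D.support_eq_cons, List.nodup_cons]
    exact ⟨fun hwD => hnd.2.2 _ hwT _ hwD rfl, hnd.2.1⟩

lemma edge_head' {u v : V} {p : G.Walk u v} (hp : p.IsPath) {e : Sym2 V}
    (he : e ∈ p.edges) (hu : u ∈ e) (hne : p.edges ≠ []) : e = p.edges.head hne := by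
  cases p with
  | nil => simp at he
  | cons h q =>
    simp only [Walk.edges_cons, List.head_cons]
    exact edge_head_of_isPath hp he hu

lemma head_edge_mem {u v : V} (p : G.Walk u v) (hne : p.edges ≠ []) : u ∈ p.edges.head hne := by
  cases p with
  | nil => simp at hne
  | cons h q =>
    simp only [Walk.edges_cons, List.head_cons]
    exact Sym2.mem_mk_left _ _

lemma edges_of_length_one {x y : V} {p : G.Walk x y} (h : p.length = 1) :
    p.edges = [s(x, y)] := by
  cases p with
  | nil => simp at h
  | @cons _ v _ ha q =>
    cases q with
    | nil => simp
    | cons hb r => simp [Walk.length_cons] at h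

lemma destruct_edge {e : Sym2 V} {v : V} (hv : v ∈ e) (he : e ∈ G.edgeSet) :
    ∃ w, G.Adj v w ∧ e = s(v, w) := by
  induction e with
  | _ x y =>
    rcases Sym2.mem_iff.mp hv with rfl | rfl
    · exact ⟨y, he, rfl⟩
    · exact ⟨x, (G.mem_edgeSet.mp he).symm, Sym2.eq_swap⟩

lemma singleton_isPath {a b : V} (h : G.Adj a b) : (Walk.cons h Walk.nil).IsPath := by
  rw [Walk.cons_isPath_iff]
  exact ⟨Walk.IsPath.nil, by simp [h.ne]⟩

lemma exists_cons_of_length_pos {u v : V} {p : G.Walk u v} (h : 0 < p.length) :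
    ∃ (w : V) (ha : G.Adj u w) (q : G.Walk w v), p = Walk.cons ha q := by
  cases p with
  | nil => simp at h
  | cons ha q => exact ⟨_, ha, q, rfl⟩


variable {f : Sym2 V → ℝ}

/-- Alternating-sign flow along a walk. -/
def wflow : ∀ {a b : V}, G.Walk a b → Sym2 V → ℝ
  | _, _, Walk.nil, _ => 0
  | _, _, Walk.cons (u := a) (v := c) _ p, e =>
      (if e = s(a, c) then 1 else 0) - wflow p e

lemma wflow_eq_zero {a b : V} (p : G.Walk a b) {e : Sym2 V} (he : e ∉ p.edges) :
    wflow p e = 0 := by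
  induction p with
  | nil => rfl
  | cons h q ih =>
      rw [Walk.edges_cons, List.mem_cons] at he
      push_neg at he
      simp [wflow, he.1, ih he.2]

lemma wflow_unit {a b : V} (p : G.Walk a b) (hn : p.edges.Nodup) {e : Sym2 V}
    (he : e ∈ p.edges) : wflow p e = 1 ∨ wflow p e = -1 := by
  induction p with
  | nil => simp at he
  | cons h q ih =>
      rw [Walk.edges_cons, List.mem_cons] at he
      rw [Walk.edges_cons, List.nodup_cons] at hn
      rcases he with he | he
      · subst he
        left
        simp [wflow, wflow_eq_zero q hn.1]
      · have hne : e ≠ s(_, _) := fun h' => hn.1 (h' ▸ he)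
        rcases ih hn.2 he with h1 | h1 <;> simp [wflow, hne, h1]

variable [Fintype V] [DecidableRel G.Adj]

/-- The (unsigned) sum of the values of `f` at the edges incident to `v`. -/
def vsum (G : SimpleGraph V) [Fintype V] [DecidableRel G.Adj]
    (f : Sym2 V → ℝ) (v : V) : ℝ := ∑ e ∈ G.edgeFinset, if v ∈ e then f e else 0

lemma vsum_wflow {a b : V} (p : G.Walk a b) (v : V) :
    vsum G (wflow p) v
      = (if v = a then 1 else 0) + (-1 : ℝ) ^ (p.length + 1) * (if v = b then 1 else 0) := by
  unfold vsum
  induction p with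
  | nil =>
      simp only [wflow]
      rw [Finset.sum_eq_zero (fun e _ => by simp)]
      split_ifs <;> simp
  | @cons a c b h q ih =>
      have hmem : s(a, c) ∈ G.edgeFinset := by
        rw [SimpleGraph.mem_edgeFinset]; exact h
      have hsplit : ∀ e ∈ G.edgeFinset, (if v ∈ e then wflow (Walk.cons h q) e else 0)
          = (if e = s(a, c) then (if v ∈ s(a,c) then (1:ℝ) else 0) else 0)
            - (if v ∈ e then wflow q e else 0) := by
        intro e _
        by_cases hv : v ∈ e <;> by_cases hh : e = s(a, c) <;>
          simp [wflow, hv, hh] <;> subst hh <;> simp_all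
      rw [Finset.sum_congr rfl hsplit, Finset.sum_sub_distrib, ih,
        Finset.sum_ite_eq' G.edgeFinset (s(a,c)) (fun _ => (if v ∈ s(a,c) then (1:ℝ) else 0)),
        if_pos hmem]
      simp only [Sym2.mem_iff]
      have hac : a ≠ c := h.ne
      rw [Walk.length_cons]
      rcases eq_or_ne v a with rfl | ha <;> rcases eq_or_ne v c with rfl | hc <;>
        rcases eq_or_ne v b with rfl | hb <;>
        simp_all <;> ring

lemma vsum_linear (g₁ g₂ : Sym2 V → ℝ) (r₁ r₂ : ℝ) (v : V) :
    vsum G (fun e => r₁ * g₁ e + r₂ * g₂ e) v = r₁ * vsum G g₁ v + r₂ * vsum G g₂ v := by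
  unfold vsum
  rw [Finset.mul_sum, Finset.mul_sum, ← Finset.sum_add_distrib]
  refine Finset.sum_congr rfl fun e _ => ?_
  by_cases hv : v ∈ e <;> simp [hv]

/-- At any vertex of an edge with nonzero value, there is an incident edge with
opposite sign. -/
lemma exists_opposite {f : Sym2 V → ℝ} (hsum : ∀ v, vsum G f v = 0)
    (hsupp : ∀ e, f e ≠ 0 → e ∈ G.edgeFinset) {v : V} {e : Sym2 V}
    (hv : v ∈ e) (hf : f e ≠ 0) :
    ∃ e', f e' ≠ 0 ∧ v ∈ e' ∧ f e' * f e < 0 := by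
  by_contra hcon
  push_neg at hcon
  have hS : ∑ e' ∈ G.edgeFinset.filter (v ∈ ·), f e' = 0 := by
    rw [Finset.sum_filter]; exact hsum v
  have hnn : ∀ e' ∈ G.edgeFinset.filter (v ∈ ·), 0 ≤ f e' * f e := by
    intro e' he'
    rw [Finset.mem_filter] at he'
    by_cases h0 : f e' = 0
    · simp [h0]
    · exact le_of_not_gt (fun hlt => (by linarith [hcon e' h0 he'.2] : False))
  have hzero : ∀ e' ∈ G.edgeFinset.filter (v ∈ ·), f e' * f e = 0 := by
    intro e' he'
    refine (Finset.sum_eq_zero_iff_of_nonneg hnn).mp ?_ e' he'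
    rw [← Finset.sum_mul, hS, zero_mul]
  have hmem : e ∈ G.edgeFinset.filter (v ∈ ·) := by
    rw [Finset.mem_filter]; exact ⟨hsupp e hf, hv⟩
  exact hf (by
    have := hzero e hmem
    rcases mul_eq_zero.mp this with h | h <;> exact h)

lemma vsum_linear3 (g₁ g₂ g₃ : Sym2 V → ℝ) (r₁ r₂ r₃ : ℝ) (v : V) :
    vsum G (fun e => r₁ * g₁ e + r₂ * g₂ e + r₃ * g₃ e) v
      = r₁ * vsum G g₁ v + r₂ * vsum G g₂ v + r₃ * vsum G g₃ v := by
  unfold vsum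
  rw [Finset.mul_sum, Finset.mul_sum, Finset.mul_sum, ← Finset.sum_add_distrib,
    ← Finset.sum_add_distrib]
  refine Finset.sum_congr rfl fun e _ => ?_
  by_cases hv : v ∈ e <;> simp [hv]

/-- Flow for an even cycle. -/
lemma flow_even_cycle {a : V} {c : G.Walk a a} (hc : c.IsCycle) (hev : Even c.length) :
    ∃ g : Sym2 V → ℝ, (∀ v, vsum G g v = 0) ∧ (∀ e ∈ c.edges, g e ≠ 0) ∧
      (∀ e, e ∉ c.edges → g e = 0) := by
  refine ⟨wflow c, fun v => ?_, fun e he => ?_, fun e he => wflow_eq_zero c he⟩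
  · rw [vsum_wflow]
    rw [Odd.neg_one_pow (by rcases hev with ⟨k, hk⟩; exact ⟨k, by omega⟩)]
    ring
  · rcases wflow_unit c hc.1.1.edges_nodup he with h | h <;> rw [h] <;> norm_num

/-- Flow for two odd cycles sharing one vertex and no edges. -/
lemma flow_two_shared {a : V} {c₁ c₂ : G.Walk a a} (h₁ : c₁.IsCycle) (h₂ : c₂.IsCycle)
    (ho₁ : Odd c₁.length) (ho₂ : Odd c₂.length)
    (hedge : ∀ e : Sym2 V, e ∈ c₁.edges → e ∉ c₂.edges) :
    ∃ g : Sym2 V → ℝ, (∀ v, vsum G g v = 0) ∧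
      (∀ e, e ∈ c₁.edges ∨ e ∈ c₂.edges → g e ≠ 0) ∧
      (∀ e, e ∉ c₁.edges → e ∉ c₂.edges → g e = 0) := by
  refine ⟨fun e => 1 * wflow c₁ e + (-1) * wflow c₂ e, fun v => ?_, fun e he => ?_,
    fun e h1 h2 => by simp [wflow_eq_zero c₁ h1, wflow_eq_zero c₂ h2]⟩
  · rw [vsum_linear, vsum_wflow, vsum_wflow,
      Even.neg_one_pow (by rcases ho₁ with ⟨k, hk⟩; exact ⟨k+1, by omega⟩),
      Even.neg_one_pow (by rcases ho₂ with ⟨k, hk⟩; exact ⟨k+1, by omega⟩)]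
    ring
  · rcases he with he | he
    · have h2 : wflow c₂ e = 0 := wflow_eq_zero c₂ (hedge e he)
      rcases wflow_unit c₁ h₁.1.1.edges_nodup he with h | h <;> simp only [h, h2] <;> norm_num
    · have h1 : wflow c₁ e = 0 := wflow_eq_zero c₁ (fun hh => hedge e hh he)
      rcases wflow_unit c₂ h₂.1.1.edges_nodup he with h | h <;> simp only [h, h1] <;> norm_num
/-- Flow for two vertex-disjoint odd cycles joined by a path. -/
lemma flow_joined {a b : V} {c₁ : G.Walk a a} {c₂ : G.Walk b b} {p : G.Walk a b}
    (h₁ : c₁.IsCycle) (h₂ : c₂.IsCycle) (ho₁ : Odd c₁.length) (ho₂ : Odd c₂.length)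
    (hp : p.IsPath)
    (hdisj : ∀ x, x ∈ c₁.support → x ∉ c₂.support)
    (hm₁ : ∀ x, x ∈ p.support → x ∈ c₁.support → x = a)
    (hm₂ : ∀ x, x ∈ p.support → x ∈ c₂.support → x = b) :
    ∃ g : Sym2 V → ℝ, (∀ v, vsum G g v = 0) ∧
      (∀ e, e ∈ c₁.edges ∨ e ∈ c₂.edges ∨ e ∈ p.edges → g e ≠ 0) ∧
      (∀ e, e ∉ c₁.edges → e ∉ c₂.edges → e ∉ p.edges → g e = 0) := by
  have hab : a ≠ b := fun h => hdisj a c₁.start_mem_support (h ▸ c₂.start_mem_support)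
  have hd12 : ∀ e, e ∈ c₁.edges → e ∉ c₂.edges := by
    intro e h1 h2
    induction e with
    | _ x y =>
      exact hdisj x (c₁.fst_mem_support_of_mem_edges h1) (c₂.fst_mem_support_of_mem_edges h2)
  have hdp1 : ∀ e, e ∈ p.edges → e ∉ c₁.edges := by
    intro e h1 h2
    induction e with
    | _ x y =>
      have hx : x = a := hm₁ x (p.fst_mem_support_of_mem_edges h1)
        (c₁.fst_mem_support_of_mem_edges h2)
      have hy : y = a := hm₁ y (p.snd_mem_support_of_mem_edges h1)
        (c₁.snd_mem_support_of_mem_edges h2)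
      exact (p.adj_of_mem_edges h1).ne (hx.trans hy.symm)
  have hdp2 : ∀ e, e ∈ p.edges → e ∉ c₂.edges := by
    intro e h1 h2
    induction e with
    | _ x y =>
      have hx : x = b := hm₂ x (p.fst_mem_support_of_mem_edges h1)
        (c₂.fst_mem_support_of_mem_edges h2)
      have hy : y = b := hm₂ y (p.snd_mem_support_of_mem_edges h1)
        (c₂.snd_mem_support_of_mem_edges h2)
      exact (p.adj_of_mem_edges h1).ne (hx.trans hy.symm)
  set s : ℝ := (-1 : ℝ) ^ (p.length + 1) with hs
  have hsne : s ≠ 0 := by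
    rw [hs]; exact pow_ne_zero _ (by norm_num)
  refine ⟨fun e => 1 * wflow c₁ e + s * wflow c₂ e + (-2) * wflow p e, fun v => ?_,
    fun e he => ?_, fun e hh1 hh2 hh3 => by
      simp [wflow_eq_zero c₁ hh1, wflow_eq_zero c₂ hh2, wflow_eq_zero p hh3]⟩
  · rw [vsum_linear3, vsum_wflow, vsum_wflow, vsum_wflow,
      Even.neg_one_pow (by rcases ho₁ with ⟨k, hk⟩; exact ⟨k+1, by omega⟩),
      Even.neg_one_pow (by rcases ho₂ with ⟨k, hk⟩; exact ⟨k+1, by omega⟩), ← hs]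
    ring
  · rcases he with he | he | he
    · have z2 : wflow c₂ e = 0 := wflow_eq_zero c₂ (hd12 e he)
      have z3 : wflow p e = 0 := wflow_eq_zero p (fun hh => hdp1 e hh he)
      rcases wflow_unit c₁ h₁.1.1.edges_nodup he with h | h <;> simp [h, z2, z3]
    · have z1 : wflow c₁ e = 0 := wflow_eq_zero c₁ (fun hh => hd12 e hh he)
      have z3 : wflow p e = 0 := wflow_eq_zero p (fun hh => hdp2 e hh he)
      rcases wflow_unit c₂ h₂.1.1.edges_nodup he with h | h <;> simp [h, z1, z3, hsne]
    · have z1 : wflow c₁ e = 0 := wflow_eq_zero c₁ (fun hh => hdp1 e he hh)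
      have z2 : wflow c₂ e = 0 := wflow_eq_zero c₂ (fun hh => hdp2 e he hh)
      rcases wflow_unit p hp.1.edges_nodup he with h | h <;> simp [h, z1, z2]
lemma single_flow {e₀ : Sym2 V}
    (hgen : LiesOnEvenCycle G e₀ ∨ LiesOnTwoOddCyclesSharingAVertex G e₀ ∨
      LiesOnTwoOddCyclesJoinedByAPath G e₀) :
    ∃ g : Sym2 V → ℝ, (∀ v, vsum G g v = 0) ∧ g e₀ ≠ 0 ∧
      ∀ e', g e' ≠ 0 → e' ∈ G.edgeFinset := by
  rcases hgen with ⟨a, c, hc, hev, he⟩ | ⟨a, c₁, c₂, h₁, h₂, ho₁, ho₂, _, hedge, he⟩ |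
    ⟨a, b, c₁, c₂, p, h₁, h₂, ho₁, ho₂, hp, hdisj, hm₁, hm₂, he⟩
  · obtain ⟨g, hv, hnz, hz⟩ := flow_even_cycle hc hev
    refine ⟨g, hv, hnz e₀ he, fun e' hne => ?_⟩
    by_contra hmem
    refine hne (hz e' (fun hee => hmem ?_))
    rw [SimpleGraph.mem_edgeFinset]
    exact c.edges_subset_edgeSet hee
  · obtain ⟨g, hv, hnz, hz⟩ := flow_two_shared h₁ h₂ ho₁ ho₂ hedge
    refine ⟨g, hv, hnz e₀ he, fun e' hne => ?_⟩
    by_contra hmem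
    refine hne (hz e' ?_ ?_) <;> intro hee <;> refine hmem ?_ <;>
      rw [SimpleGraph.mem_edgeFinset]
    · exact c₁.edges_subset_edgeSet hee
    · exact c₂.edges_subset_edgeSet hee
  · obtain ⟨g, hv, hnz, hz⟩ := flow_joined h₁ h₂ ho₁ ho₂ hp hdisj hm₁ hm₂
    refine ⟨g, hv, hnz e₀ he, fun e' hne => ?_⟩
    by_contra hmem
    refine hne (hz e' ?_ ?_ ?_) <;> intro hee <;> refine hmem ?_ <;>
      rw [SimpleGraph.mem_edgeFinset]
    · exact c₁.edges_subset_edgeSet hee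
    · exact c₂.edges_subset_edgeSet hee
    · exact p.edges_subset_edgeSet hee

lemma combine_flows
    (hgen : ∀ e ∈ G.edgeSet, LiesOnEvenCycle G e ∨ LiesOnTwoOddCyclesSharingAVertex G e ∨
      LiesOnTwoOddCyclesJoinedByAPath G e) :
    ∀ s : Finset (Sym2 V), s ⊆ G.edgeFinset →
      ∃ F : Sym2 V → ℝ, (∀ v, vsum G F v = 0) ∧ ∀ e ∈ s, F e ≠ 0 := by
  intro s
  induction s using Finset.induction_on with
  | empty =>
      intro _
      exact ⟨fun _ => 0, fun v => by simp [vsum], by simp⟩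
  | @insert e s hes ih =>
      intro hsub
      obtain ⟨F₀, hF₀v, hF₀⟩ := ih (fun x hx => hsub (Finset.mem_insert_of_mem hx))
      have hemem : e ∈ G.edgeFinset := hsub (Finset.mem_insert_self e s)
      obtain ⟨g, hgv, hge, hgsupp⟩ := single_flow
        (hgen e (SimpleGraph.mem_edgeFinset.mp hemem))
      obtain ⟨c, hc⟩ := Infinite.exists_notMem_finset
        ((insert e s).image (fun e' => -(F₀ e') / g e'))
      refine ⟨fun x => 1 * F₀ x + c * g x, fun v => by
        rw [vsum_linear, hF₀v, hgv]; ring, fun e' he' => ?_⟩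
      by_cases hg0 : g e' = 0
      · have he's : e' ∈ s := by
          rcases Finset.mem_insert.mp he' with rfl | h
          · exact absurd hg0 hge
          · exact h
        simp only [hg0, one_mul, mul_zero, add_zero]
        exact hF₀ e' he's
      · intro h0
        refine hc (Finset.mem_image.mpr ⟨e', he', ?_⟩)
        simp only [one_mul] at h0
        field_simp
        linarith [h0]
lemma even_from_chord {z w : V} {C : G.Walk z z} (hC : C.IsCycle) (hodd : Odd C.length)
    {R : G.Walk w z} (hR : R.IsPath) (hwC : w ∈ C.support) (hwz : w ≠ z)
    (hmeet : ∀ x, x ∈ R.support → x ∈ C.support → x = w ∨ x = z)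
    (hRC : ∀ e ∈ R.edges, e ∉ C.edges)
    (hfC : ∀ e ∈ C.edges, f e ≠ 0) (hfR : ∀ e ∈ R.edges, f e ≠ 0) :
    ∃ (a : V) (c : G.Walk a a), c.IsCycle ∧ Even c.length ∧ ∀ e ∈ c.edges, f e ≠ 0 := by
  set A₁ := C.takeUntil w hwC with hA₁def
  set A₂ := C.dropUntil w hwC with hA₂def
  obtain ⟨hA₁, hA₂⟩ := cycle_split_isPath hC hwC hwz
  have hspec : A₁.append A₂ = C := C.take_spec hwC
  have hlen : A₁.length + A₂.length = C.length := by
    rw [← Walk.length_append, hspec]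
  have ha₁ : 1 ≤ A₁.length := by
    rcases Nat.eq_zero_or_pos A₁.length with h | h
    · exact absurd (Walk.eq_of_length_eq_zero h).symm hwz
    · exact h
  have ha₂ : 1 ≤ A₂.length := by
    rcases Nat.eq_zero_or_pos A₂.length with h | h
    · exact absurd (Walk.eq_of_length_eq_zero h) hwz
    · exact h
  have hr : 1 ≤ R.length := by
    rcases Nat.eq_zero_or_pos R.length with h | h
    · exact absurd (Walk.eq_of_length_eq_zero h) hwz
    · exact h
  have hA₁sub := C.support_takeUntil_subset hwC
  have hA₂sub := C.support_dropUntil_subset hwC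
  have hA₁esub := C.edges_takeUntil_subset hwC
  have hA₂esub := C.edges_dropUntil_subset hwC
  rcases Nat.even_or_odd (A₁.length + R.length) with hpar | hpar
  · -- use A₁ ++ R
    have hlen3 : 3 ≤ A₁.length + R.length := by
      rcases Nat.lt_or_ge (A₁.length + R.length) 3 with h | h
      · exfalso
        have h1 : A₁.length = 1 := by omega
        have h2 : R.length = 1 := by omega
        have e1 : s(z, w) ∈ A₁.edges := by rw [edges_of_length_one h1]; simp
        have e2 : s(w, z) ∈ R.edges := by rw [edges_of_length_one h2]; simp
        exact hRC _ e2 (by rw [Sym2.eq_swap]; exact hA₁esub e1)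
      · exact h
    refine ⟨z, A₁.append R, glue_isCycle hA₁ hR hwz.symm ?_ hlen3, ?_, ?_⟩
    · intro x hx1 hx2
      rcases hmeet x hx2 (hA₁sub hx1) with h | h
      · right; exact h
      · left; exact h
    · rwa [Walk.length_append]
    · intro e he
      rw [Walk.edges_append, List.mem_append] at he
      rcases he with he | he
      · exact hfC e (hA₁esub he)
      · exact hfR e he
  · -- use A₂ ++ R.reverse
    have hpar2 : Even (A₂.length + R.reverse.length) := by
      rw [Walk.length_reverse, Nat.even_iff]
      rw [Nat.odd_iff] at hpar hodd
      omega
    have hlen3 : 3 ≤ A₂.length + R.reverse.length := by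
      rw [Walk.length_reverse]
      rcases Nat.lt_or_ge (A₂.length + R.length) 3 with h | h
      · exfalso
        have h1 : A₂.length = 1 := by omega
        have h2 : R.length = 1 := by omega
        have e1 : s(w, z) ∈ A₂.edges := by rw [edges_of_length_one h1]; simp
        have e2 : s(w, z) ∈ R.edges := by rw [edges_of_length_one h2]; simp
        exact hRC _ e2 (hA₂esub e1)
      · exact h
    refine ⟨w, A₂.append R.reverse, glue_isCycle hA₂ hR.reverse hwz ?_ hlen3, ?_, ?_⟩
    · intro x hx1 hx2
      rw [Walk.support_reverse, List.mem_reverse] at hx2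
      rcases hmeet x hx2 (hA₂sub hx1) with h | h
      · left; exact h
      · right; exact h
    · rwa [Walk.length_append]
    · intro e he
      rw [Walk.edges_append, List.mem_append] at he
      rcases he with he | he
      · exact hfC e (hA₂esub he)
      · rw [Walk.edges_reverse, List.mem_reverse] at he
        exact hfR e he
theorem crux [Fintype V] [DecidableRel G.Adj]
    (hsum : ∀ v, vsum G f v = 0)
    (hsupp : ∀ e, f e ≠ 0 → e ∈ G.edgeFinset) {e₀ : Sym2 V} (hf0 : f e₀ ≠ 0) :
    (∃ (a : V) (c : G.Walk a a), c.IsCycle ∧ Even c.length ∧ ∀ e ∈ c.edges, f e ≠ 0) ∨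
    (∃ (a : V) (c₁ c₂ : G.Walk a a), c₁.IsCycle ∧ c₂.IsCycle ∧ Odd c₁.length ∧ Odd c₂.length ∧
      (∀ x, x ∈ c₁.support → x ∈ c₂.support → x = a) ∧
      (∀ e', e' ∈ c₁.edges → e' ∉ c₂.edges) ∧
      (∀ e, e ∈ c₁.edges ∨ e ∈ c₂.edges → f e ≠ 0)) ∨
    (∃ (a b : V) (c₁ : G.Walk a a) (c₂ : G.Walk b b) (p : G.Walk a b),
      c₁.IsCycle ∧ c₂.IsCycle ∧ Odd c₁.length ∧ Odd c₂.length ∧ p.IsPath ∧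
      (∀ x, x ∈ c₁.support → x ∉ c₂.support) ∧
      (∀ x, x ∈ p.support → x ∈ c₁.support → x = a) ∧
      (∀ x, x ∈ p.support → x ∈ c₂.support → x = b) ∧
      (∀ e, e ∈ c₁.edges ∨ e ∈ c₂.edges ∨ e ∈ p.edges → f e ≠ 0)) := by
  classical
  have hsupp' : ∀ e, f e ≠ 0 → e ∈ G.edgeSet := fun e he =>
    SimpleGraph.mem_edgeFinset.mp (hsupp e he)
  -- Stage 1 : a maximal sign-alternating path
  set S1 : Set ℕ := {n | ∃ (u v : V) (p : G.Walk u v), p.IsPath ∧ (∀ e ∈ p.edges, f e ≠ 0) ∧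
      p.edges.Chain' (fun e e' => f e * f e' < 0) ∧ p.length = n} with hS1
  obtain ⟨y₀, hadj₀, he₀eq⟩ := destruct_edge (Sym2.out_fst_mem e₀) (hsupp' _ hf0)
  have hseed : (1 : ℕ) ∈ S1 := by
    refine ⟨_, _, Walk.cons hadj₀ Walk.nil, singleton_isPath hadj₀, ?_, List.isChain_singleton _, rfl⟩
    intro e he
    simp only [Walk.edges_cons, Walk.edges_nil, List.mem_singleton] at he
    rw [he, ← he₀eq]; exact hf0
  obtain ⟨n₁, hn₁mem, hn₁max⟩ := exists_max_nat S1 ⟨1, hseed⟩ (Fintype.card V)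
    (fun n hn => by obtain ⟨u, v, p, hp, -, -, hl⟩ := hn; exact hl ▸ hp.length_lt.le)
  obtain ⟨x, y, P, hP, hPf, hPch, hPlen⟩ := hn₁mem
  have hn₁1 : 1 ≤ n₁ := hn₁max 1 hseed
  obtain ⟨v₁, h₁, P₁, rfl⟩ := exists_cons_of_length_pos (p := P) (by omega)
  have he₁mem : s(x, v₁) ∈ (Walk.cons h₁ P₁).edges := by
    rw [Walk.edges_cons]; exact List.mem_cons_self
  have he₁f : f s(x, v₁) ≠ 0 := hPf _ he₁mem
  obtain ⟨g', hg'f, hg'mem, hg'sign⟩ := exists_opposite hsum hsupp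
    (Sym2.mem_mk_left x v₁) he₁f
  obtain ⟨z, hxz, hg'eq⟩ := destruct_edge hg'mem (hsupp' _ hg'f)
  have hg'swap : s(z, x) = g' := by rw [hg'eq, Sym2.eq_swap]
  have hzP : z ∈ (Walk.cons h₁ P₁).support := by
    by_contra hzP
    have hmem : n₁ + 1 ∈ S1 := by
      refine ⟨z, y, Walk.cons hxz.symm (Walk.cons h₁ P₁),
        (Walk.cons_isPath_iff _ _).mpr ⟨hP, hzP⟩, ?_, ?_, by rw [Walk.length_cons, hPlen]⟩
      · intro e he
        rw [Walk.edges_cons, List.mem_cons] at he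
        rcases he with rfl | he
        · rw [hg'swap]; exact hg'f
        · exact hPf e he
      · rw [Walk.edges_cons, Walk.edges_cons]; change List.IsChain _ _; rw [List.isChain_cons_cons]
        refine ⟨?_, by rw [← Walk.edges_cons h₁]; exact hPch⟩
        rw [hg'swap]; exact hg'sign
    have := hn₁max _ hmem; omega
  have hzx : z ≠ x := fun h => G.irrefl (h ▸ hxz)
  set t := (Walk.cons h₁ P₁).takeUntil z hzP with ht
  have htpath : t.IsPath := hP.takeUntil hzP
  have htedges : ∀ e ∈ t.edges, e ∈ (Walk.cons h₁ P₁).edges :=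
    fun e he => (Walk.cons h₁ P₁).edges_takeUntil_subset hzP he
  have htf : ∀ e ∈ t.edges, f e ≠ 0 := fun e he => hPf e (htedges e he)
  have htch : t.edges.Chain' (fun e e' => f e * f e' < 0) := by
    have h2 := hPch
    rw [← (Walk.cons h₁ P₁).take_spec hzP, Walk.edges_append] at h2
    exact (List.isChain_append.mp h2).1
  have hti : 1 ≤ t.length := by
    rcases Nat.eq_zero_or_pos t.length with h | h
    · exact absurd (Walk.eq_of_length_eq_zero h).symm hzx
    · exact h
  have htne : t.edges ≠ [] := by
    intro h
    have := congrArg List.length h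
    rw [Walk.length_edges] at this
    simp only [List.length_nil] at this; omega
  have hthead : t.edges.head htne = s(x, v₁) := by
    have h2 := edge_head' hP (htedges _ (List.head_mem htne)) (head_edge_mem t htne)
      (by rw [Walk.edges_cons]; exact List.cons_ne_nil _ _)
    simp only [Walk.edges_cons, List.head_cons] at h2
    exact h2
  have hti2 : 2 ≤ t.length := by
    rcases Nat.lt_or_ge t.length 2 with h | h
    · exfalso
      have h1 : t.length = 1 := by omega
      have hmem : s(x, z) ∈ t.edges := by rw [edges_of_length_one h1]; simp
      have hxx : s(x, z) = s(x, v₁) :=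
        edge_head_of_isPath hP (htedges _ hmem) (Sym2.mem_mk_left _ _)
      rw [hg'eq, hxx] at hg'sign
      nlinarith [hg'sign, mul_self_nonneg (f s(x, v₁))]
    · exact h
  have hq : (Walk.cons hxz Walk.nil : G.Walk x z).IsPath := singleton_isPath hxz
  set C := t.reverse.append (Walk.cons hxz Walk.nil) with hCdef
  have hCcyc : C.IsCycle := by
    refine glue_isCycle htpath.reverse hq hzx ?_ ?_
    · intro x' hx1 hx2
      simp only [Walk.support_cons, Walk.support_nil, List.mem_cons, List.mem_singleton] at hx2
      rcases hx2 with rfl | rfl | h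
      · right; rfl
      · left; rfl
      · simp at h
    · rw [Walk.length_reverse]; simp only [Walk.length_cons, Walk.length_nil]; omega
  have hClen : C.length = t.length + 1 := by
    rw [hCdef, Walk.length_append, Walk.length_reverse]; simp
  have hCedges : C.edges = t.reverse.edges ++ [s(x, z)] := by
    rw [hCdef, Walk.edges_append]; simp
  have hCf : ∀ e ∈ C.edges, f e ≠ 0 := by
    intro e he
    rw [hCedges, List.mem_append] at he
    rcases he with he | he
    · rw [Walk.edges_reverse, List.mem_reverse] at he; exact htf e he
    · rw [List.mem_singleton] at he; rw [he, ← hg'eq]; exact hg'f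
  rcases Nat.even_or_odd C.length with hCev | hCodd
  · exact Or.inl ⟨z, C, hCcyc, hCev, hCf⟩
  -- the cycle C is odd
  have htlene : Even t.length := by
    rw [hClen, Nat.odd_iff] at hCodd
    rw [Nat.even_iff]; omega
  have hmapne : t.edges.map f ≠ [] := by simp [htne]
  have halt := alt_sign (t.edges.map f) ((List.isChain_map f).mpr htch)
      (by intro r hr; rw [List.mem_map] at hr; obtain ⟨e, he, rfl⟩ := hr; exact htf e he) hmapne
  rw [List.head_map, List.getLast_map, List.length_map] at halt
  have halt' : 0 < f (t.edges.head htne) * f (t.edges.getLast htne)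
      * (-1 : ℝ) ^ (t.edges.length + 1) := halt
  set eL := t.edges.getLast htne with heLdef
  have heLf : f eL ≠ 0 := htf _ (List.getLast_mem htne)
  have hsignL : f s(x, v₁) * f eL < 0 := by
    have hlw : t.edges.length = t.length := Walk.length_edges t
    have hpow : (-1 : ℝ) ^ (t.edges.length + 1) = -1 := by
      refine Odd.neg_one_pow ?_
      rw [hlw, Nat.odd_iff]
      rw [Nat.even_iff] at htlene
      omega
    rw [hthead, hpow] at halt'
    nlinarith [halt']
  have hgL : 0 < f g' * f eL := by
    nlinarith [hg'sign, hsignL, mul_self_pos.mpr he₁f]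
  have htrevne : t.reverse.edges ≠ [] := by
    rw [Walk.edges_reverse]; simp [htne]
  have htrevhead : t.reverse.edges.head htrevne = eL := by
    simp only [Walk.edges_reverse, List.head_reverse]; rfl
  have hzeL : z ∈ eL := by rw [← htrevhead]; exact head_edge_mem t.reverse htrevne
  obtain ⟨h', hh'f, hzh', hh'sign⟩ := exists_opposite hsum hsupp hzeL heLf
  have hh'eL : h' ≠ eL := by
    intro h; rw [h] at hh'sign
    nlinarith [mul_self_nonneg (f eL)]
  have hh'g : h' ≠ g' := by
    intro h; rw [h] at hh'sign; linarith
  have hh'notC : h' ∉ C.edges := by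
    intro hmem
    rw [hCedges, List.mem_append] at hmem
    rcases hmem with hmem | hmem
    · exact hh'eL (by rw [edge_head' htpath.reverse hmem hzh' htrevne, htrevhead])
    · rw [List.mem_singleton] at hmem
      exact hh'g (by rw [hmem, ← hg'eq])
  obtain ⟨y', hzy', hh'eq⟩ := destruct_edge hzh' (hsupp' _ hh'f)
  have hy'z : y' ≠ z := fun h => G.irrefl (h ▸ hzy')
  have hh'swap : s(y', z) = h' := by rw [hh'eq, Sym2.eq_swap]
  by_cases hy'C : y' ∈ C.support
  · refine Or.inl (even_from_chord hCcyc hCodd (singleton_isPath hzy'.symm) hy'C hy'z ?_ ?_ hCf ?_)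
    · intro x' hx1 hx2
      simp only [Walk.support_cons, Walk.support_nil, List.mem_cons,
        List.mem_singleton, List.not_mem_nil, or_false] at hx1
      exact hx1
    · intro e he
      simp only [Walk.edges_cons, Walk.edges_nil, List.mem_singleton] at he
      rw [he, hh'swap]; exact hh'notC
    · intro e he
      simp only [Walk.edges_cons, Walk.edges_nil, List.mem_singleton] at he
      rw [he, hh'swap]; exact hh'f
  · -- Stage 2
    set S2 : Set ℕ := {n | ∃ (u : V) (Q : G.Walk u z), Q.IsPath ∧ (∀ e ∈ Q.edges, f e ≠ 0) ∧
        (∀ x' ∈ Q.support, x' ∈ C.support → x' = z) ∧ Q.length = n} with hS2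
    have hseed2 : (1 : ℕ) ∈ S2 := by
      refine ⟨y', Walk.cons hzy'.symm Walk.nil, singleton_isPath hzy'.symm, ?_, ?_, rfl⟩
      · intro e he
        simp only [Walk.edges_cons, Walk.edges_nil, List.mem_singleton] at he
        rw [he, hh'swap]; exact hh'f
      · intro x' hx1 hx2
        simp only [Walk.support_cons, Walk.support_nil, List.mem_cons,
          List.mem_singleton, List.not_mem_nil, or_false] at hx1
        rcases hx1 with rfl | rfl
        · exact absurd hx2 hy'C
        · rfl
    obtain ⟨m, hmmem, hmmax⟩ := exists_max_nat S2 ⟨1, hseed2⟩ (Fintype.card V)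
      (fun n hn => by obtain ⟨u, Q, hQ, -, -, hl⟩ := hn; exact hl ▸ hQ.length_lt.le)
    obtain ⟨u, Q, hQ, hQf, hQmeet, hQlen⟩ := hmmem
    have hm1 : 1 ≤ m := hmmax 1 hseed2
    have huz : u ≠ z := by
      intro h; subst h
      have h2 := Walk.isPath_iff_eq_nil.mp hQ
      rw [h2] at hQlen
      simp only [Walk.length_nil] at hQlen
      omega
    have huC : u ∉ C.support := fun h => huz (hQmeet u Q.start_mem_support h)
    obtain ⟨u₂, hq2, Q₁, rfl⟩ := exists_cons_of_length_pos (p := Q) (by omega)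
    set QQ := Walk.cons hq2 Q₁ with hQQdef
    have heQmem : s(u, u₂) ∈ QQ.edges := by
      rw [hQQdef, Walk.edges_cons]; exact List.mem_cons_self
    have heQf : f s(u, u₂) ≠ 0 := hQf _ heQmem
    obtain ⟨g'', hg''f, hg''mem, hg''sign⟩ := exists_opposite hsum hsupp
      (Sym2.mem_mk_left u u₂) heQf
    obtain ⟨w, huw, hg''eq⟩ := destruct_edge hg''mem (hsupp' _ hg''f)
    have hg''swap : s(w, u) = g'' := by rw [hg''eq, Sym2.eq_swap]
    have hwu : w ≠ u := fun h => G.irrefl (h ▸ huw)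
    have hg''notQ : g'' ∉ QQ.edges := by
      intro hmem
      have h2 := edge_head' hQ hmem hg''mem
        (by rw [hQQdef, Walk.edges_cons]; exact List.cons_ne_nil _ _)
      simp only [hQQdef, Walk.edges_cons, List.head_cons] at h2
      rw [h2] at hg''sign
      nlinarith [mul_self_nonneg (f s(u, u₂))]
    have hwcase : w ∈ QQ.support ∨ (w ∈ C.support ∧ w ≠ z) := by
      by_contra hcon
      push_neg at hcon
      obtain ⟨hw1, hw2⟩ := hcon
      have hmem : m + 1 ∈ S2 := by
        refine ⟨w, Walk.cons huw.symm QQ, (Walk.cons_isPath_iff _ _).mpr ⟨hQ, hw1⟩, ?_, ?_, by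
          rw [Walk.length_cons, hQlen]⟩
        · intro e he
          rw [Walk.edges_cons, List.mem_cons] at he
          rcases he with rfl | he
          · rw [hg''swap]; exact hg''f
          · exact hQf e he
        · intro x' hx1 hx2
          rw [Walk.support_cons, List.mem_cons] at hx1
          rcases hx1 with rfl | hx1
          · exact hw2 hx2
          · exact hQmeet x' hx1 hx2
      have := hmmax _ hmem; omega
    have hQCedge : ∀ e, e ∈ QQ.edges → e ∉ C.edges := by
      intro e h1 h2
      induction e with
      | _ a b =>
        have ha := hQmeet a (mem_support_of_mem_edges' h1 (Sym2.mem_mk_left a b))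
          (mem_support_of_mem_edges' h2 (Sym2.mem_mk_left a b))
        have hb := hQmeet b (mem_support_of_mem_edges' h1 (Sym2.mem_mk_right a b))
          (mem_support_of_mem_edges' h2 (Sym2.mem_mk_right a b))
        exact (QQ.adj_of_mem_edges h1).ne (ha.trans hb.symm)
    by_cases hwC : w ∈ C.support ∧ w ≠ z
    · -- Case 2a : even cycle via a chord path
      have hwQ : w ∉ QQ.support := fun h => hwC.2 (hQmeet w h hwC.1)
      refine Or.inl (even_from_chord hCcyc hCodd (R := Walk.cons huw.symm QQ)
        ((Walk.cons_isPath_iff _ _).mpr ⟨hQ, hwQ⟩) hwC.1 hwC.2 ?_ ?_ hCf ?_)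
      · intro x' hx1 hx2
        rw [Walk.support_cons, List.mem_cons] at hx1
        rcases hx1 with rfl | hx1
        · left; rfl
        · right; exact hQmeet x' hx1 hx2
      · intro e he hc
        rw [Walk.edges_cons, List.mem_cons] at he
        rcases he with rfl | he
        · exact huC (mem_support_of_mem_edges' hc (Sym2.mem_mk_right w u))
        · exact hQCedge e he hc
      · intro e he
        rw [Walk.edges_cons, List.mem_cons] at he
        rcases he with rfl | he
        · rw [hg''swap]; exact hg''f
        · exact hQf e he
    · have hwQ : w ∈ QQ.support := by
        rcases hwcase with h | h
        · exact h
        · exact absurd h hwC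
      have hwz2 : w ∈ C.support → w = z := fun h => not_not.mp (not_and.mp hwC h)
      by_cases hwzeq : w = z
      · -- two odd cycles sharing the vertex z (or an even cycle)
        subst hwzeq
        set C₂ := Walk.cons huw.symm QQ with hC₂def
        have hC₂cyc : C₂.IsCycle := by
          rw [hC₂def]
          exact (Walk.cons_isCycle_iff QQ huw.symm).mpr
            ⟨hQ, fun hc => hg''notQ (by rwa [hg''swap] at hc)⟩
        have hC₂f : ∀ e ∈ C₂.edges, f e ≠ 0 := by
          intro e he
          rw [hC₂def, Walk.edges_cons, List.mem_cons] at he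
          rcases he with rfl | he
          · rw [hg''swap]; exact hg''f
          · exact hQf e he
        rcases Nat.even_or_odd C₂.length with hev | hodd2
        · exact Or.inl ⟨w, C₂, hC₂cyc, hev, hC₂f⟩
        · refine Or.inr (Or.inl ⟨w, C, C₂, hCcyc, hC₂cyc, hCodd, hodd2, ?_, ?_, ?_⟩)
          · intro x' hx1 hx2
            rw [hC₂def, Walk.support_cons, List.mem_cons] at hx2
            rcases hx2 with rfl | hx2
            · rfl
            · exact hQmeet x' hx2 hx1
          · intro e' he1 he2
            rw [hC₂def, Walk.edges_cons, List.mem_cons] at he2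
            rcases he2 with rfl | he2
            · exact huC (mem_support_of_mem_edges' he1 (Sym2.mem_mk_right w u))
            · exact hQCedge e' he2 he1
          · intro e he
            rcases he with he | he
            · exact hCf e he
            · exact hC₂f e he
      · -- two disjoint odd cycles joined by a path (or an even cycle)
        set T := QQ.takeUntil w hwQ with hT
        set D := QQ.dropUntil w hwQ with hD
        have hTpath : T.IsPath := hQ.takeUntil hwQ
        have hDpath : D.IsPath := hQ.dropUntil hwQ
        have hTe : ∀ e ∈ T.edges, e ∈ QQ.edges := fun e he => QQ.edges_takeUntil_subset hwQ he
        have hDe : ∀ e ∈ D.edges, e ∈ QQ.edges := fun e he => QQ.edges_dropUntil_subset hwQ he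
        have hTs : ∀ x' ∈ T.support, x' ∈ QQ.support :=
          fun x' h => QQ.support_takeUntil_subset hwQ h
        have hDs : ∀ x' ∈ D.support, x' ∈ QQ.support :=
          fun x' h => QQ.support_dropUntil_subset hwQ h
        have hdecomp : T.support ++ D.support.tail = QQ.support := by
          rw [← Walk.support_append, QQ.take_spec hwQ]
        have hnodup := hQ.support_nodup
        rw [← hdecomp, List.nodup_append] at hnodup
        obtain ⟨hndT, hndD, hdisj⟩ := hnodup
        have hzD : z ∈ D.support.tail := by
          have hz : z ∈ D.support := D.end_mem_support
          rw [D.support_eq_cons] at hz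
          rcases List.mem_cons.mp hz with h | h
          · exact absurd h.symm hwzeq
          · exact h
        have hzT : z ∉ T.support := fun h => hdisj _ h _ hzD rfl
        set C'' := Walk.cons huw.symm T with hC''def
        have hC''cyc : C''.IsCycle := by
          rw [hC''def]
          refine (Walk.cons_isCycle_iff T huw.symm).mpr ⟨hTpath, fun hc => hg''notQ ?_⟩
          rw [← hg''swap]
          exact hTe _ hc
        have hC''f : ∀ e ∈ C''.edges, f e ≠ 0 := by
          intro e he
          rw [hC''def, Walk.edges_cons, List.mem_cons] at he
          rcases he with rfl | he
          · rw [hg''swap]; exact hg''f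
          · exact hQf e (hTe e he)
        rcases Nat.even_or_odd C''.length with hev | hodd2
        · exact Or.inl ⟨w, C'', hC''cyc, hev, hC''f⟩
        · refine Or.inr (Or.inr ⟨z, w, C, C'', D.reverse, hCcyc, hC''cyc, hCodd, hodd2,
            hDpath.reverse, ?_, ?_, ?_, ?_⟩)
          · intro x' hx1 hx2
            rw [hC''def, Walk.support_cons, List.mem_cons] at hx2
            rcases hx2 with rfl | hx2
            · exact hwzeq (hwz2 hx1)
            · exact hzT ((hQmeet x' (hTs _ hx2) hx1) ▸ hx2)
          · intro x' hx1 hx2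
            rw [Walk.support_reverse, List.mem_reverse] at hx1
            exact hQmeet x' (hDs _ hx1) hx2
          · intro x' hx1 hx2
            rw [Walk.support_reverse, List.mem_reverse] at hx1
            rw [hC''def, Walk.support_cons, List.mem_cons] at hx2
            rcases hx2 with rfl | hx2
            · rfl
            · rw [D.support_eq_cons] at hx1
              rcases List.mem_cons.mp hx1 with h | h
              · exact h
              · exact absurd h (fun h' => hdisj _ hx2 _ h' rfl)
          · intro e he
            rcases he with he | he | he
            · exact hCf e he
            · exact hC''f e he
            · rw [Walk.edges_reverse, List.mem_reverse] at he
              exact hQf e (hDe e he)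
lemma cycle_edges_ne_nil {a : V} {c : G.Walk a a} (hc : c.IsCycle) : c.edges ≠ [] := by
  intro h
  have h3 := hc.three_le_length
  have := congrArg List.length h
  rw [Walk.length_edges, List.length_nil] at this
  omega

/-- The subtraction / support-reduction step, as a reusable lemma. -/
lemma reduce_step {f g : Sym2 V → ℝ} {E : Sym2 V → Prop}
    (hsum : ∀ v, vsum G f v = 0) (hsupp : ∀ e, f e ≠ 0 → e ∈ G.edgeFinset)
    (hgv : ∀ v, vsum G g v = 0)
    (hgz : ∀ e, ¬ E e → g e = 0) (hfe : ∀ e, E e → f e ≠ 0)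
    {e₁ : Sym2 V} (hE₁ : E e₁) (hge₁ : g e₁ ≠ 0) :
    ∃ f' : Sym2 V → ℝ, (∀ v, vsum G f' v = 0) ∧ (∀ e, f' e ≠ 0 → e ∈ G.edgeFinset) ∧
      (G.edgeFinset.filter (fun e => f' e ≠ 0))
        ⊆ (G.edgeFinset.filter (fun e => f e ≠ 0)).erase e₁ ∧
      (∀ e, ¬ E e → f' e = f e) := by
  classical
  set c : ℝ := -(f e₁ / g e₁) with hcdef
  refine ⟨fun x => 1 * f x + c * g x, fun v => by rw [vsum_linear, hsum, hgv]; ring, ?_, ?_, ?_⟩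
  · intro e he
    by_contra hmem
    have hf0 : f e = 0 := by
      by_contra h; exact hmem (hsupp e h)
    have hg0 : g e = 0 := by
      refine hgz e (fun hEe => hmem (hsupp e (hfe e hEe)))
    simp [hf0, hg0] at he
  · intro e he
    rw [Finset.mem_filter] at he
    obtain ⟨hemem, hene⟩ := he
    have hfne : f e ≠ 0 := by
      intro hf0
      have hg0 : g e = 0 := hgz e (fun hEe => (hfe e hEe) hf0)
      simp [hf0, hg0] at hene
    refine Finset.mem_erase.mpr ⟨?_, Finset.mem_filter.mpr ⟨hemem, hfne⟩⟩
    intro heq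
    subst heq
    apply hene
    simp only [hcdef]
    field_simp; ring
  · intro e hEe
    simp [hgz e hEe]

lemma main_ind : ∀ (n : ℕ) (f : Sym2 V → ℝ),
    (∀ v, vsum G f v = 0) → (∀ e, f e ≠ 0 → e ∈ G.edgeFinset) →
    (G.edgeFinset.filter (fun e => f e ≠ 0)).card ≤ n →
    ∀ e₀, f e₀ ≠ 0 → (LiesOnEvenCycle G e₀ ∨ LiesOnTwoOddCyclesSharingAVertex G e₀ ∨
      LiesOnTwoOddCyclesJoinedByAPath G e₀) := by
  intro n
  induction n with
  | zero =>
      intro f hsum hsupp hcard e₀ hf0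
      exfalso
      have : e₀ ∈ G.edgeFinset.filter (fun e => f e ≠ 0) :=
        Finset.mem_filter.mpr ⟨hsupp e₀ hf0, hf0⟩
      have h2 := Finset.card_eq_zero.mp (Nat.le_zero.mp hcard)
      rw [h2] at this
      simp at this
  | succ n ih =>
      intro f hsum hsupp hcard e₀ hf0
      have hcard1 : 1 ≤ (G.edgeFinset.filter (fun e => f e ≠ 0)).card :=
        Finset.card_pos.mpr ⟨e₀, Finset.mem_filter.mpr ⟨hsupp e₀ hf0, hf0⟩⟩
      rcases crux hsum hsupp hf0 with ⟨a, cyc, hc, hev, hfe⟩ |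
        ⟨a, c₁, c₂, h₁, h₂, ho₁, ho₂, hshare, hedge, hfe⟩ |
        ⟨a, b, c₁, c₂, p, h₁, h₂, ho₁, ho₂, hp, hdisj, hm₁, hm₂, hfe⟩
      · by_cases he₀ : e₀ ∈ cyc.edges
        · exact Or.inl ⟨a, cyc, hc, hev, he₀⟩
        · obtain ⟨g, hgv, hgnz, hgz⟩ := flow_even_cycle hc hev
          set e₁ := cyc.edges.head (cycle_edges_ne_nil hc) with he₁def
          have he₁ : e₁ ∈ cyc.edges := List.head_mem _
          obtain ⟨f', hf'v, hf'supp, hf'sub, hf'eq⟩ := reduce_step (E := (· ∈ cyc.edges))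
            hsum hsupp hgv hgz hfe he₁ (hgnz _ he₁)
          have he₁f : f e₁ ≠ 0 := hfe _ he₁
          have he₁mem : e₁ ∈ G.edgeFinset.filter (fun e => f e ≠ 0) :=
            Finset.mem_filter.mpr ⟨hsupp _ he₁f, he₁f⟩
          refine ih f' hf'v hf'supp ?_ e₀ (by rw [hf'eq e₀ he₀]; exact hf0)
          calc (G.edgeFinset.filter (fun e => f' e ≠ 0)).card
              ≤ ((G.edgeFinset.filter (fun e => f e ≠ 0)).erase e₁).card :=
                Finset.card_le_card hf'sub
            _ = (G.edgeFinset.filter (fun e => f e ≠ 0)).card - 1 :=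
                Finset.card_erase_of_mem he₁mem
            _ ≤ n := by omega
      · by_cases he₀ : e₀ ∈ c₁.edges ∨ e₀ ∈ c₂.edges
        · exact Or.inr (Or.inl ⟨a, c₁, c₂, h₁, h₂, ho₁, ho₂, hshare, hedge, he₀⟩)
        · obtain ⟨g, hgv, hgnz, hgz⟩ := flow_two_shared h₁ h₂ ho₁ ho₂ hedge
          set e₁ := c₁.edges.head (cycle_edges_ne_nil h₁) with he₁def
          have he₁ : e₁ ∈ c₁.edges ∨ e₁ ∈ c₂.edges := Or.inl (List.head_mem _)
          obtain ⟨f', hf'v, hf'supp, hf'sub, hf'eq⟩ := reduce_step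
            (E := fun e => e ∈ c₁.edges ∨ e ∈ c₂.edges)
            hsum hsupp hgv (fun e he => hgz e (fun h => he (Or.inl h)) (fun h => he (Or.inr h)))
            hfe he₁ (hgnz _ he₁)
          have he₁f : f e₁ ≠ 0 := hfe _ he₁
          have he₁mem : e₁ ∈ G.edgeFinset.filter (fun e => f e ≠ 0) :=
            Finset.mem_filter.mpr ⟨hsupp _ he₁f, he₁f⟩
          refine ih f' hf'v hf'supp ?_ e₀ (by rw [hf'eq e₀ he₀]; exact hf0)
          calc (G.edgeFinset.filter (fun e => f' e ≠ 0)).card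
              ≤ ((G.edgeFinset.filter (fun e => f e ≠ 0)).erase e₁).card :=
                Finset.card_le_card hf'sub
            _ = (G.edgeFinset.filter (fun e => f e ≠ 0)).card - 1 :=
                Finset.card_erase_of_mem he₁mem
            _ ≤ n := by omega
      · by_cases he₀ : e₀ ∈ c₁.edges ∨ e₀ ∈ c₂.edges ∨ e₀ ∈ p.edges
        · exact Or.inr (Or.inr ⟨a, b, c₁, c₂, p, h₁, h₂, ho₁, ho₂, hp, hdisj, hm₁, hm₂, he₀⟩)
        · obtain ⟨g, hgv, hgnz, hgz⟩ := flow_joined h₁ h₂ ho₁ ho₂ hp hdisj hm₁ hm₂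
          set e₁ := c₁.edges.head (cycle_edges_ne_nil h₁) with he₁def
          have he₁ : e₁ ∈ c₁.edges ∨ e₁ ∈ c₂.edges ∨ e₁ ∈ p.edges :=
            Or.inl (List.head_mem _)
          obtain ⟨f', hf'v, hf'supp, hf'sub, hf'eq⟩ := reduce_step
            (E := fun e => e ∈ c₁.edges ∨ e ∈ c₂.edges ∨ e ∈ p.edges)
            hsum hsupp hgv (fun e he => hgz e (fun h => he (Or.inl h))
              (fun h => he (Or.inr (Or.inl h))) (fun h => he (Or.inr (Or.inr h))))
            hfe he₁ (hgnz _ he₁)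
          have he₁f : f e₁ ≠ 0 := hfe _ he₁
          have he₁mem : e₁ ∈ G.edgeFinset.filter (fun e => f e ≠ 0) :=
            Finset.mem_filter.mpr ⟨hsupp _ he₁f, he₁f⟩
          refine ih f' hf'v hf'supp ?_ e₀ (by rw [hf'eq e₀ he₀]; exact hf0)
          calc (G.edgeFinset.filter (fun e => f' e ≠ 0)).card
              ≤ ((G.edgeFinset.filter (fun e => f e ≠ 0)).erase e₁).card :=
                Finset.card_le_card hf'sub
            _ = (G.edgeFinset.filter (fun e => f e ≠ 0)).card - 1 :=
                Finset.card_erase_of_mem he₁mem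
            _ ≤ n := by omega

end Graphs

end MergerAux

open MergerAux SimpleGraph Walk in
/-- A nowhere-zero edge assignment whose unsigned sum at every vertex vanishes exists if
and only if every edge of the graph belongs to a merger generator subgraph. -/
theorem stmt_6 {V : Type*} [Fintype V] [DecidableEq V]
    (G : SimpleGraph V) [DecidableRel G.Adj] :
    (∃ f : Sym2 V → ℝ, (∀ e ∈ G.edgeFinset, f e ≠ 0) ∧
      ∀ v : V, ∑ e ∈ G.edgeFinset, (if v ∈ e then f e else 0) = 0) ↔
    (∀ e ∈ G.edgeSet, LiesOnEvenCycle G e ∨ LiesOnTwoOddCyclesSharingAVertex G e ∨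
      LiesOnTwoOddCyclesJoinedByAPath G e) := by
  constructor
  · rintro ⟨f, hnz, hsum⟩ e he
    set f' : Sym2 V → ℝ := fun e => if e ∈ G.edgeFinset then f e else 0 with hf'def
    have hsum' : ∀ v, vsum G f' v = 0 := by
      intro v
      have h2 : vsum G f' v = ∑ e ∈ G.edgeFinset, if v ∈ e then f e else 0 := by
        unfold vsum
        exact Finset.sum_congr rfl fun e' he' => by simp only [hf'def, if_pos he']
      rw [h2, hsum v]
    have hsupp' : ∀ e', f' e' ≠ 0 → e' ∈ G.edgeFinset := by
      intro e' h
      by_contra hm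
      exact h (by simp only [hf'def, if_neg hm])
    have hmem : e ∈ G.edgeFinset := SimpleGraph.mem_edgeFinset.mpr he
    have hf0 : f' e ≠ 0 := by
      simp only [hf'def, if_pos hmem]
      exact hnz e hmem
    exact main_ind _ f' hsum' hsupp' le_rfl e hf0
  · intro hgen
    obtain ⟨F, hFv, hFnz⟩ := combine_flows hgen G.edgeFinset (Finset.Subset.refl _)
    exact ⟨F, hFnz, fun v => hFv v⟩
end

section
/- Let N ≥ 1 and 1 ≤ p ≤ N be integers. For a composition (n₁,…,n_p) of N (i.e., positive integers with n₁ + ⋯ + n_p = N) set N_l = n₁ + ⋯ + n_l and N₀ = 0. Then Σ over all compositions (n₁,…,n_p) of N of ∏_{l=0}^{p−1} 1/(N − N_l) equals c(N,p)/N!, where c(N,p) is the number of permutations of an N-element set having exactly p orbits (cycles, with fixed points counted as cycles of length 1). In other words, this sum equals the fraction of permutations of S_N built up from exactly p cycles. -/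
open Finset

/-- The number of orbits (cycles, fixed points included) of a permutation `σ`. -/
noncomputable def permOrbitCount {α : Type*} (σ : Equiv.Perm α) : ℕ :=
  Nat.card (MulAction.orbitRel.Quotient (Subgroup.zpowers σ) α)

set_option linter.unusedSectionVars false

namespace Stmt9

open Equiv Equiv.Perm

variable {α β : Type*}

lemma rel_iff (σ : Perm α) (x y : α) :
    (MulAction.orbitRel (Subgroup.zpowers σ) α) x y ↔ σ.SameCycle y x := by
  rw [MulAction.orbitRel_apply, MulAction.mem_orbit_iff]
  constructor
  · rintro ⟨⟨g, m, rfl⟩, h⟩; exact ⟨m, h⟩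
  · rintro ⟨m, h⟩; exact ⟨⟨σ ^ m, m, rfl⟩, h⟩

lemma oc_def (σ : Perm α) :
    permOrbitCount σ = Nat.card (Quotient (MulAction.orbitRel (Subgroup.zpowers σ) α)) := rfl

/-- shorthand for the orbit quotient -/
abbrev QT {γ : Type*} (σ : Perm γ) := Quotient (MulAction.orbitRel (Subgroup.zpowers σ) γ)

lemma qsound {γ : Type*} (σ : Perm γ) {x y : γ} (h : σ.SameCycle y x) :
    (Quotient.mk'' x : QT σ) = Quotient.mk'' y :=
  Quotient.sound' ((rel_iff σ x y).mpr h)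

lemma step_const {γ : Type*} [Finite γ] (τ : Perm γ) {Q : Sort*} (h : γ → Q)
    (hstep : ∀ w, h (τ w) = h w) {u v : γ} (huv : τ.SameCycle u v) : h u = h v := by
  obtain ⟨n, -, rfl⟩ := huv.exists_pow_eq'
  clear huv
  induction n with
  | zero => simp
  | succ n ih => rw [pow_succ', mul_apply, hstep]; exact ih

/-- `Equiv.permCongr` as a monoid hom. -/
def pcHom {α β : Type*} (f : α ≃ β) : Perm α →* Perm β where
  toFun := f.permCongr
  map_one' := by ext x; simp
  map_mul' := by intro a b; ext x; simp

lemma pcHom_zpow {α β : Type*} (f : α ≃ β) (σ : Perm α) (n : ℤ) :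
    (f.permCongr σ) ^ n = f.permCongr (σ ^ n) := (map_zpow (pcHom f) σ n).symm

lemma oc_permCongr {α β : Type*} (f : α ≃ β) (σ : Perm α) :
    permOrbitCount (f.permCongr σ) = permOrbitCount σ := by
  rw [oc_def, oc_def]
  refine (Nat.card_congr (Quotient.congr f fun a b => ?_)).symm
  rw [rel_iff, rel_iff]
  constructor
  · rintro ⟨n, hn⟩
    exact ⟨n, by rw [pcHom_zpow]; simp [hn]⟩
  · rintro ⟨n, hn⟩
    have := congrArg f.symm hn
    rw [pcHom_zpow] at this
    exact ⟨n, by simpa using this⟩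

section OptionPart
variable [Fintype α] [DecidableEq α]

/-- Orbits of `e.optionCongr` : orbits of `e` plus the fixed point `none`. -/
def quotOptionEquiv (e : Perm α) : QT (e.optionCongr) ≃ Option (QT e) where
  toFun q := q.liftOn' (fun o => o.map fun x => Quotient.mk'' x) (by
    intro u v huv
    refine (step_const e.optionCongr _ (fun w => ?_) ((rel_iff _ _ _).mp huv)).symm
    cases w with
    | none => simp
    | some x =>
        simp only [optionCongr_apply, Option.map_some, Option.map_map]
        exact congrArg some (qsound e ⟨1, rfl⟩))
  invFun o := o.elim (Quotient.mk'' none)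
    (fun q => q.liftOn' (fun x => Quotient.mk'' (some x)) (by
      intro x y hxy
      refine (step_const e (fun x => (Quotient.mk'' (some x) : QT e.optionCongr))
        (fun w => ?_) ((rel_iff _ _ _).mp hxy)).symm
      exact qsound _ ⟨1, rfl⟩))
  left_inv q := by
    refine Quotient.inductionOn' q (fun o => ?_)
    cases o with
    | none => simp [Quotient.liftOn'_mk'']
    | some x => simp [Quotient.liftOn'_mk'']
  right_inv o := by
    cases o with
    | none => simp [Quotient.liftOn'_mk'']
    | some q =>
        refine Quotient.inductionOn' q (fun x => ?_)
        simp [Quotient.liftOn'_mk'']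

lemma oc_optionCongr (e : Perm α) :
    permOrbitCount e.optionCongr = permOrbitCount e + 1 := by
  rw [oc_def, oc_def, Nat.card_congr (quotOptionEquiv e), Finite.card_option]

/-- Orbits of `swap none (some b) * e.optionCongr` : same as orbits of `e`
(`none` is inserted into the cycle of `b`). -/
def quotSwapEquiv (b : α) (e : Perm α) :
    QT (swap none (some b) * e.optionCongr) ≃ QT e where
  toFun q := q.liftOn' (fun o => o.elim (Quotient.mk'' b) (fun x => Quotient.mk'' x)) (by
    intro u v huv
    refine (step_const (swap none (some b) * e.optionCongr)
      (fun o => o.elim (Quotient.mk'' b) (fun x => Quotient.mk'' x)) (fun w => ?_)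
      ((rel_iff _ _ _).mp huv)).symm
    cases w with
    | none => simp
    | some x =>
        by_cases h : e x = b
        · have h1 : (swap none (some b) * e.optionCongr) (some x) = none := by
            simp [mul_apply, h]
          rw [h1]
          exact qsound e ⟨1, by simpa using h⟩
        · have h1 : (swap none (some b) * e.optionCongr) (some x) = some (e x) := by
            simp [mul_apply]
            exact swap_apply_of_ne_of_ne (by simp) (by simpa using h)
          rw [h1]
          exact qsound e ⟨1, by simp⟩)
  invFun q := q.liftOn' (fun x => Quotient.mk'' (some x)) (by
    intro x y hxy
    refine (step_const e (fun x => (Quotient.mk'' (some x) : QT _)) (fun w => ?_)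
      ((rel_iff _ _ _).mp hxy)).symm
    by_cases h : e w = b
    · refine qsound _ ⟨2, ?_⟩
      have h1 : (swap none (some b) * e.optionCongr) (some w) = none := by
        simp [mul_apply, h]
      have h2 : (swap none (some b) * e.optionCongr) none = some b := by
        simp [mul_apply]
      show ((swap none (some b) * e.optionCongr) ^ (2:ℤ)) (some w) = some (e w)
      rw [zpow_two, mul_apply, h1, h2, h]
    · refine qsound _ ⟨1, ?_⟩
      have : (swap (none : Option α) (some b)) (some (e w)) = some (e w) :=
        swap_apply_of_ne_of_ne (by simp) (by simpa using h)
      simp [mul_apply, this])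
  left_inv q := by
    refine Quotient.inductionOn' q (fun o => ?_)
    cases o with
    | none =>
        simp only [Quotient.liftOn'_mk'']
        exact qsound _ ⟨1, by simp [mul_apply]⟩
    | some x => simp [Quotient.liftOn'_mk'']
  right_inv q := by
    refine Quotient.inductionOn' q (fun x => ?_)
    simp [Quotient.liftOn'_mk'']

lemma oc_swap_option (b : α) (e : Perm α) :
    permOrbitCount (swap none (some b) * e.optionCongr) = permOrbitCount e := by
  rw [oc_def, oc_def, Nat.card_congr (quotSwapEquiv b e)]

end OptionPart

section Count

lemma surj_mk {γ : Type*} (s : Setoid γ) : Function.Surjective (Quotient.mk'' (s₁ := s)) :=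
  fun q => Quotient.inductionOn' q fun x => ⟨x, rfl⟩

lemma oc_pos {γ : Type*} [Finite γ] [Nonempty γ] (σ : Perm γ) : 1 ≤ permOrbitCount σ := by
  rw [oc_def]
  have : Nonempty (QT σ) := ⟨Quotient.mk'' (Classical.arbitrary γ)⟩
  exact Nat.card_pos

lemma oc_le_card {γ : Type*} [Fintype γ] (σ : Perm γ) :
    permOrbitCount σ ≤ Fintype.card γ := by
  rw [oc_def, ← Nat.card_eq_fintype_card]
  exact Nat.card_le_card_of_surjective _ (surj_mk _)

/-- number of permutations of `Fin N` with `p` orbits -/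
noncomputable def g (N p : ℕ) : ℕ :=
  Nat.card {σ : Perm (Fin N) // permOrbitCount σ = p}

lemma g_zero {N : ℕ} (hN : 1 ≤ N) : g N 0 = 0 := by
  have : Nonempty (Fin N) := ⟨⟨0, hN⟩⟩
  have : IsEmpty {σ : Perm (Fin N) // permOrbitCount σ = 0} := by
    refine ⟨fun σ => ?_⟩
    have := oc_pos σ.1
    omega
  simp [g, Nat.card_of_isEmpty]

lemma g_gt {N p : ℕ} (h : N < p) : g N p = 0 := by
  have : IsEmpty {σ : Perm (Fin N) // permOrbitCount σ = p} := by
    refine ⟨fun σ => ?_⟩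
    have := oc_le_card σ.1
    rw [σ.2, Fintype.card_fin] at this
    omega
  simp [g, Nat.card_of_isEmpty]

lemma g_one : g 1 1 = 1 := by
  have : Unique {σ : Perm (Fin 1) // permOrbitCount σ = 1} := by
    refine ⟨⟨⟨1, ?_⟩⟩, fun σ => ?_⟩
    · exact le_antisymm (by simpa using oc_le_card (1 : Perm (Fin 1))) (oc_pos _)
    · exact Subtype.ext (Subsingleton.elim _ _)
  simp [g, Nat.card_unique]

lemma nat_card_sigma {ι : Type*} [Fintype ι] (f : ι → Type*) [∀ i, Finite (f i)] :
    Nat.card (Σ i, f i) = ∑ i, Nat.card (f i) := by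
  classical
  letI : ∀ i, Fintype (f i) := fun i => Fintype.ofFinite _
  simp [Nat.card_eq_fintype_card, Fintype.card_sigma]

lemma g_rec (N p : ℕ) : g (N + 1) (p + 1) = g N p + N * g N (p + 1) := by
  classical
  have E1 : {σ : Perm (Fin (N + 1)) // permOrbitCount σ = p + 1} ≃
      {σ : Perm (Option (Fin N)) // permOrbitCount σ = p + 1} :=
    (finSuccEquiv N).permCongr.subtypeEquiv fun σ => by rw [oc_permCongr]
  have E2 : {σ : Perm (Option (Fin N)) // permOrbitCount σ = p + 1} ≃
      {x : Option (Fin N) × Perm (Fin N) //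
        permOrbitCount (Perm.decomposeOption.symm x) = p + 1} :=
    Perm.decomposeOption.subtypeEquiv fun σ => by rw [Equiv.symm_apply_apply]
  have E3 : {x : Option (Fin N) × Perm (Fin N) //
        permOrbitCount (Perm.decomposeOption.symm x) = p + 1} ≃
      Σ i : Option (Fin N),
        {e : Perm (Fin N) // permOrbitCount (Perm.decomposeOption.symm (i, e)) = p + 1} :=
    (Equiv.subtypeEquivRight fun x => by rw [Prod.mk.eta]).trans
      (Equiv.subtypeProdEquivSigmaSubtype fun i e =>
        permOrbitCount (Perm.decomposeOption.symm (i, e)) = p + 1)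
  rw [g, Nat.card_congr ((E1.trans E2).trans E3), nat_card_sigma, Fintype.sum_option]
  congr 1
  · refine Nat.card_congr (Equiv.subtypeEquivRight fun e => ?_)
    rw [Perm.decomposeOption_symm_apply]
    simp only [swap_self]
    rw [show (Equiv.refl (Option (Fin N))) = 1 from rfl, one_mul, oc_optionCongr]
    omega
  · rw [Finset.sum_congr rfl (fun b _ => ?_), Finset.sum_const, card_univ, Fintype.card_fin,
      smul_eq_mul]
    refine Nat.card_congr (Equiv.subtypeEquivRight fun e => ?_)
    rw [Perm.decomposeOption_symm_apply, oc_swap_option]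

end Count

section Comp

lemma cons_headI_tail {l : List ℕ} (h : l ≠ []) : l.headI :: l.tail = l := by
  cases l with
  | nil => exact absurd rfl h
  | cons a t => rfl

/-- the composition sum -/
noncomputable def F (N p : ℕ) : ℚ :=
  ∑ c : {c : Composition N // c.length = p},
    ∏ l ∈ Finset.range p, (1 : ℚ) / ((N : ℚ) - ((c : Composition N).sizeUpTo l : ℚ))

lemma F_zero {N : ℕ} (hN : 1 ≤ N) : F N 0 = 0 := by
  have : IsEmpty {c : Composition N // c.length = 0} := by
    refine ⟨fun c => ?_⟩
    have hb : c.1.blocks = [] := List.length_eq_zero_iff.mp c.2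
    have hs := c.1.blocks_sum
    rw [hb] at hs
    simp at hs
    omega
  simp [F]

lemma F_gt {N p : ℕ} (h : N < p) : F N p = 0 := by
  have : IsEmpty {c : Composition N // c.length = p} :=
    ⟨fun c => absurd (c.2 ▸ c.1.length_le) (by omega)⟩
  simp [F]

lemma F_one : F 1 1 = 1 := by
  have : Unique {c : Composition 1 // c.length = 1} := by
    refine ⟨⟨⟨Composition.ones 1, by simp⟩⟩, ?_⟩
    rintro ⟨⟨bl, hpos, hsum⟩, hlen⟩
    apply Subtype.ext
    apply Composition.ext
    simp only [Composition.length] at hlen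
    obtain ⟨a, rfl⟩ := List.length_eq_one_iff.mp hlen
    simp only [List.sum_cons, List.sum_nil, add_zero] at hsum
    simp [hsum, Composition.ones]
  rw [F, Fintype.sum_unique]
  norm_num [Composition.sizeUpTo_zero]

/-- single composition term -/
noncomputable def T (N p : ℕ) (c : Composition N) : ℚ :=
  ∏ l ∈ Finset.range p, (1 : ℚ) / ((N : ℚ) - (c.sizeUpTo l : ℚ))

lemma F_eq_T (N p : ℕ) : F N p = ∑ c : {c : Composition N // c.length = p}, T N p c.1 := rfl

/-- prepend a block of size 1 -/
def consComp (N p : ℕ) (c : {c : Composition N // c.length = p}) :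
    {c : Composition (N + 1) // c.length = p + 1} :=
  ⟨⟨1 :: c.1.blocks, by
      intro i hi
      rcases List.mem_cons.mp hi with rfl | hi
      · norm_num
      · exact c.1.blocks_pos hi, by
      simp only [List.sum_cons, c.1.blocks_sum]; omega⟩, by
    have := c.2
    simp only [Composition.length, List.length_cons] at this ⊢
    omega⟩

lemma blocks_ne_nil {N p : ℕ} (c : {c : Composition N // c.length = p + 1}) :
    c.1.blocks ≠ [] := by
  have := c.2
  simp only [Composition.length] at this
  exact List.ne_nil_of_length_pos (by omega)

lemma headI_pos {N p : ℕ} (c : {c : Composition N // c.length = p + 1}) :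
    0 < c.1.blocks.headI := by
  refine c.1.blocks_pos ?_
  have h := cons_headI_tail (blocks_ne_nil c)
  have m : c.1.blocks.headI ∈ c.1.blocks.headI :: c.1.blocks.tail := List.mem_cons_self
  rwa [h] at m

lemma headI_add_tail {N p : ℕ} (c : {c : Composition N // c.length = p + 1}) :
    c.1.blocks.headI + c.1.blocks.tail.sum = N := by
  have := c.1.blocks_sum
  conv_lhs => rw [← List.sum_cons, cons_headI_tail (blocks_ne_nil c)]
  exact this

/-- increment the first block -/
def incrComp (N p : ℕ) (c : {c : Composition N // c.length = p + 1}) :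
    {c : Composition (N + 1) // c.length = p + 1} :=
  ⟨⟨(c.1.blocks.headI + 1) :: c.1.blocks.tail, by
      intro i hi
      rcases List.mem_cons.mp hi with rfl | hi
      · omega
      · exact c.1.blocks_pos (List.mem_of_mem_tail hi), by
      simp only [List.sum_cons]
      have := headI_add_tail c
      omega⟩, by
    have := c.2
    simp only [Composition.length, List.length_cons, List.length_tail] at this ⊢
    omega⟩

/-- splitting a composition of `N+1` of length `p+1` according to whether the first
block is `1` or larger -/
def splitEquiv (N p : ℕ) :
    {c : Composition (N + 1) // c.length = p + 1} ≃
      ({c : Composition N // c.length = p} ⊕ {c : Composition N // c.length = p + 1}) where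
  toFun c :=
    if h : c.1.blocks.headI = 1 then
      Sum.inl ⟨⟨c.1.blocks.tail, fun hi => c.1.blocks_pos (List.mem_of_mem_tail hi), by
        have := headI_add_tail c; omega⟩, by
        have := c.2
        simp only [Composition.length, List.length_tail] at this ⊢
        omega⟩
    else
      Sum.inr ⟨⟨(c.1.blocks.headI - 1) :: c.1.blocks.tail, by
        intro i hi
        rcases List.mem_cons.mp hi with rfl | hi
        · have := headI_pos c; omega
        · exact c.1.blocks_pos (List.mem_of_mem_tail hi), by
        simp only [List.sum_cons]
        have h1 := headI_add_tail c
        have h2 := headI_pos c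
        omega⟩, by
        have := c.2
        simp only [Composition.length, List.length_cons, List.length_tail] at this ⊢
        omega⟩
  invFun x := x.elim (consComp N p) (incrComp N p)
  left_inv c := by
    by_cases h : c.1.blocks.headI = 1
    · simp only [dif_pos h, Sum.elim_inl, consComp]
      apply Subtype.ext
      apply Composition.ext
      show 1 :: c.1.blocks.tail = c.1.blocks
      have := cons_headI_tail (blocks_ne_nil c)
      rwa [h] at this
    · simp only [dif_neg h, Sum.elim_inr, incrComp]
      apply Subtype.ext
      apply Composition.ext
      show (c.1.blocks.headI - 1 + 1) :: c.1.blocks.tail = c.1.blocks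
      have := headI_pos c
      rw [Nat.sub_add_cancel (by omega)]
      exact cons_headI_tail (blocks_ne_nil c)
  right_inv x := by
    cases x with
    | inl c =>
      simp only [Sum.elim_inl, consComp]
      refine (dif_pos (show ((1 : ℕ) :: (c.1).blocks).headI = 1 from rfl)).trans ?_
      congr 1
    | inr c =>
      simp only [Sum.elim_inr, incrComp]
      refine (dif_neg (show ¬(((c.1).blocks.headI + 1) :: (c.1).blocks.tail).headI = 1 by
        show ¬(c.1.blocks.headI + 1 = 1)
        have := headI_pos c
        omega)).trans ?_
      congr 1
      apply Subtype.ext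
      apply Composition.ext
      show (c.1.blocks.headI + 1 - 1) :: c.1.blocks.tail = c.1.blocks
      rw [Nat.add_sub_cancel]
      exact cons_headI_tail (blocks_ne_nil c)

lemma sizeUpTo_cons {N p : ℕ} (c : {c : Composition N // c.length = p}) (l : ℕ) :
    (consComp N p c).1.sizeUpTo (l + 1) = c.1.sizeUpTo l + 1 := by
  show ((1 :: c.1.blocks).take (l + 1)).sum = (c.1.blocks.take l).sum + 1
  rw [List.take_succ_cons, List.sum_cons]
  omega

lemma sizeUpTo_incr {N p : ℕ} (c : {c : Composition N // c.length = p + 1}) (l : ℕ) :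
    (incrComp N p c).1.sizeUpTo (l + 1) = c.1.sizeUpTo (l + 1) + 1 := by
  show (((c.1.blocks.headI + 1) :: c.1.blocks.tail).take (l + 1)).sum
      = (c.1.blocks.take (l + 1)).sum + 1
  conv_rhs => rw [← cons_headI_tail (blocks_ne_nil c)]
  rw [List.take_succ_cons, List.sum_cons, List.take_succ_cons, List.sum_cons]
  omega

lemma T_cons {N p : ℕ} (c : {c : Composition N // c.length = p}) :
    T (N + 1) (p + 1) (consComp N p c).1 = 1 / ((N : ℚ) + 1) * T N p c.1 := by
  have key : ∀ l ∈ Finset.range p,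
      (1 : ℚ) / (((N + 1 : ℕ) : ℚ) - ((consComp N p c).1.sizeUpTo (l + 1) : ℚ))
        = (1 : ℚ) / ((N : ℚ) - (c.1.sizeUpTo l : ℚ)) := by
    intro l _
    rw [sizeUpTo_cons]
    push_cast
    ring_nf
  rw [T, Finset.prod_range_succ', Finset.prod_congr rfl key, Composition.sizeUpTo_zero, T]
  push_cast
  simp only [one_div]
  ring

lemma T_incr {N p : ℕ} (hN : 1 ≤ N) (c : {c : Composition N // c.length = p + 1}) :
    T (N + 1) (p + 1) (incrComp N p c).1 = (N : ℚ) / ((N : ℚ) + 1) * T N (p + 1) c.1 := by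
  have hN0 : (N : ℚ) ≠ 0 := Nat.cast_ne_zero.mpr (by omega)
  have key : ∀ l ∈ Finset.range p,
      (1 : ℚ) / (((N + 1 : ℕ) : ℚ) - ((incrComp N p c).1.sizeUpTo (l + 1) : ℚ))
        = (1 : ℚ) / ((N : ℚ) - (c.1.sizeUpTo (l + 1) : ℚ)) := by
    intro l _
    rw [sizeUpTo_incr]
    push_cast
    ring_nf
  have hT : T N (p + 1) c.1
      = (∏ l ∈ Finset.range p, (1 : ℚ) / ((N : ℚ) - (c.1.sizeUpTo (l + 1) : ℚ))) * (1 / (N : ℚ)) := by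
    rw [T, Finset.prod_range_succ', Composition.sizeUpTo_zero]
    norm_num
  have hP : (∏ l ∈ Finset.range p, (1 : ℚ) / ((N : ℚ) - (c.1.sizeUpTo (l + 1) : ℚ)))
      = (N : ℚ) * T N (p + 1) c.1 := by
    rw [hT, mul_comm _ (1 / (N : ℚ)), ← mul_assoc, mul_one_div_cancel hN0, one_mul]
  rw [T, Finset.prod_range_succ', Finset.prod_congr rfl key, Composition.sizeUpTo_zero, hP]
  push_cast
  ring

lemma F_rec {N : ℕ} (hN : 1 ≤ N) (p : ℕ) :
    F (N + 1) (p + 1)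
      = 1 / ((N : ℚ) + 1) * F N p + (N : ℚ) / ((N : ℚ) + 1) * F N (p + 1) := by
  rw [F_eq_T,
    ← Equiv.sum_comp (splitEquiv N p).symm (fun c => T (N + 1) (p + 1) c.1),
    Fintype.sum_sum_type]
  simp only [show ∀ c, (splitEquiv N p).symm (Sum.inl c) = consComp N p c from fun _ => rfl,
    show ∀ c, (splitEquiv N p).symm (Sum.inr c) = incrComp N p c from fun _ => rfl]
  rw [Finset.sum_congr rfl (fun (c : {c : Composition N // c.length = p}) _ => T_cons c),
    Finset.sum_congr rfl
      (fun (c : {c : Composition N // c.length = p + 1}) _ => T_incr hN c),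
    ← Finset.mul_sum, ← Finset.mul_sum, ← F_eq_T, ← F_eq_T]

lemma master (N : ℕ) (hN : 1 ≤ N) : ∀ p : ℕ, F N p = (g N p : ℚ) / (N.factorial : ℚ) := by
  induction N with
  | zero => omega
  | succ N ih =>
    intro p
    rcases Nat.eq_zero_or_pos N with rfl | hN'
    · -- N + 1 = 1
      match p with
      | 0 => rw [F_zero (by omega), g_zero (by omega)]; norm_num
      | 1 => rw [F_one, g_one]; norm_num
      | (q + 2) => rw [F_gt (by omega), g_gt (by omega)]; norm_num
    · have ihN := ih hN'
      match p with
      | 0 => rw [F_zero (by omega), g_zero (by omega)]; norm_num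
      | (q + 1) =>
        rw [F_rec hN' q, ihN q, ihN (q + 1), g_rec N q]
        have hf : (N.factorial : ℚ) ≠ 0 := Nat.cast_ne_zero.mpr N.factorial_ne_zero
        have hN1 : (N : ℚ) + 1 ≠ 0 := by positivity
        push_cast [Nat.factorial_succ]
        field_simp
        try ring

end Comp
end Stmt9

open Stmt9 in
/-- The sum over compositions `(n₁,…,n_p)` of `N` of `Π_{l=0}^{p-1} 1/(N - N_l)`,
where `N_l = n₁ + ⋯ + n_l`, equals the fraction of permutations of `S_N` built up from
exactly `p` cycles. -/
theorem stmt_9 (N p : ℕ) (hN : 1 ≤ N) (hp1 : 1 ≤ p) (hpN : p ≤ N) :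
    (∑ c : {c : Composition N // c.length = p},
        ∏ l ∈ Finset.range p, (1 : ℚ) / ((N : ℚ) - ((c : Composition N).sizeUpTo l : ℚ)))
      = (Nat.card {σ : Equiv.Perm (Fin N) // permOrbitCount σ = p} : ℚ) /
        (N.factorial : ℚ) := by
  exact master N hN p
end

section
/- Let N ≥ 1 and 1 ≤ p ≤ N be integers. Then (1/p!) · Σ over all compositions (n₁,…,n_p) of N of ∏_{l=1}^{p} 1/n_l equals c(N,p)/N!, where c(N,p) is the number of permutations of an N-element set having exactly p orbits (cycles, with fixed points counted as cycles of length 1). -/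
open Finset

theorem Equiv.Perm.apply_inv_self {α : Type*} (f : Equiv.Perm α) (x : α) : f (f⁻¹ x) = x :=
  f.apply_symm_apply x

theorem Equiv.Perm.inv_apply_self {α : Type*} (f : Equiv.Perm α) (x : α) : f⁻¹ (f x) = x :=
  f.symm_apply_apply x

namespace StirlingFirst
open Equiv MulAction Subgroup Function

lemma finRotate_apply_val {n : ℕ} (x : Fin n) : ((finRotate n) x : ℕ) = (x + 1) % n := by
  match n, x with
  | n+1, x => rw [finRotate_succ_apply, Fin.val_add, Fin.val_one', Nat.add_mod_mod]

lemma finRotate_pow_val {n : ℕ} (k : Fin n) (m : ℕ) :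
    (((finRotate n) ^ m) k : ℕ) = (k + m) % n := by
  induction m generalizing k with
  | zero => simp [Nat.mod_eq_of_lt k.isLt]
  | succ m ih =>
    rw [pow_succ', Equiv.Perm.mul_apply, finRotate_apply_val, ih, Nat.mod_add_mod, Nat.add_assoc]

lemma finRotate_exists_pow {n : ℕ} (k k' : Fin n) : ∃ m : ℕ, ((finRotate n) ^ m) k = k' := by
  refine ⟨k'.val + n - k.val, Fin.ext ?_⟩
  rw [finRotate_pow_val]
  have h1 := k.isLt
  have h2 := k'.isLt
  have : (k : ℕ) + ((k' : ℕ) + n - (k : ℕ)) = (k' : ℕ) + n := by omega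
  rw [this, Nat.add_mod_right, Nat.mod_eq_of_lt h2]

variable {N : ℕ}


/-- Sigma-type equality for fibers of `Fin`-valued families via values. -/
lemma sigma_fin_ext {q : ℕ} {n : Fin q → ℕ} {s s' : Σ i, Fin (n i)}
    (h1 : s.1 = s'.1) (h2 : (s.2 : ℕ) = (s'.2 : ℕ)) : s = s' := by
  obtain ⟨i, k⟩ := s
  obtain ⟨i', k'⟩ := s'
  subst h1
  simpa using Fin.ext h2

/-- The block rotation permutation associated to a composition. -/
def crho (c : Composition N) : Equiv.Perm (Fin N) :=
  c.blocksFinEquiv.symm.trans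
    ((Equiv.sigmaCongrRight fun i => finRotate (c.blocksFun i)).trans c.blocksFinEquiv)

lemma crho_apply (c : Composition N) (s : Σ i : Fin c.length, Fin (c.blocksFun i)) :
    crho c (c.blocksFinEquiv s) = c.blocksFinEquiv ⟨s.1, finRotate _ s.2⟩ := by
  simp [crho, Equiv.sigmaCongrRight]

lemma crho_pow_apply (c : Composition N) (m : ℕ) (s : Σ i : Fin c.length, Fin (c.blocksFun i)) :
    ((crho c) ^ m) (c.blocksFinEquiv s) = c.blocksFinEquiv ⟨s.1, ((finRotate _) ^ m) s.2⟩ := by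
  induction m with
  | zero => simp
  | succ m ih =>
    rw [pow_succ', Equiv.Perm.mul_apply, ih, crho_apply, pow_succ', Equiv.Perm.mul_apply]

/-- The block index of a position. -/
def cidx (c : Composition N) (j : Fin N) : Fin c.length := (c.blocksFinEquiv.symm j).1

lemma cidx_crho (c : Composition N) (j : Fin N) : cidx c (crho c j) = cidx c j := by
  conv_lhs => rw [← Equiv.apply_symm_apply c.blocksFinEquiv j]
  rw [crho_apply]
  simp [cidx]

/-- Invariance of a function constant along `σ` under the whole cyclic group. -/
lemma zpowers_inv {α β : Type*} {σ g : Equiv.Perm α} {t : α → β}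
    (h1 : ∀ x, t (σ x) = t x) (hg : g ∈ Subgroup.zpowers σ) (x : α) : t (g x) = t x := by
  let S : Subgroup (Equiv.Perm α) :=
    { carrier := {g | ∀ x, t (g x) = t x}
      one_mem' := fun x => rfl
      mul_mem' := by
        intro a b ha hb x
        rw [Equiv.Perm.mul_apply, ha, hb]
      inv_mem' := by
        intro a ha x
        conv_rhs => rw [← Equiv.Perm.apply_inv_self a x, ha] }
  have hS : σ ∈ S := h1
  exact Subgroup.zpowers_le.mpr hS hg x

/-- Permutations of `Fin n` commuting with `finRotate n` are its powers: there are `n` of them. -/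
def rotCentEquiv (n : ℕ) (hn : 0 < n) :
    {v : Equiv.Perm (Fin n) // ∀ x, v (finRotate n x) = finRotate n (v x)} ≃ Fin n where
  toFun v := v.1 ⟨0, hn⟩
  invFun k := ⟨(finRotate n) ^ (k : ℕ), fun x => by
    rw [← Equiv.Perm.mul_apply, ← Equiv.Perm.mul_apply, ← pow_succ, ← pow_succ']⟩
  left_inv := by
    rintro ⟨v, hv⟩
    have hcomm : ∀ m x, v (((finRotate n) ^ m) x) = ((finRotate n) ^ m) (v x) := by
      intro m x
      induction m generalizing x with
      | zero => simp
      | succ m ih => rw [pow_succ', Equiv.Perm.mul_apply, hv, ih, Equiv.Perm.mul_apply]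
    apply Subtype.ext
    apply Equiv.ext
    intro x
    have hx : ((finRotate n) ^ (x : ℕ)) ⟨0, hn⟩ = x := by
      apply Fin.ext
      rw [finRotate_pow_val]
      simp [Nat.mod_eq_of_lt x.isLt]
    show ((finRotate n) ^ ((v ⟨0, hn⟩ : Fin n) : ℕ)) x = v x
    calc ((finRotate n) ^ ((v ⟨0, hn⟩ : Fin n) : ℕ)) x
        = ((finRotate n) ^ ((v ⟨0, hn⟩ : Fin n) : ℕ)) (((finRotate n) ^ (x : ℕ)) ⟨0, hn⟩) := by
          rw [hx]
      _ = ((finRotate n) ^ (((v ⟨0, hn⟩ : Fin n) : ℕ) + (x : ℕ))) ⟨0, hn⟩ := by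
          rw [← Equiv.Perm.mul_apply, ← pow_add]
      _ = ((finRotate n) ^ (x : ℕ)) (((finRotate n) ^ ((v ⟨0, hn⟩ : Fin n) : ℕ)) ⟨0, hn⟩) := by
          rw [← Equiv.Perm.mul_apply, ← pow_add, Nat.add_comm]
      _ = ((finRotate n) ^ (x : ℕ)) (v ⟨0, hn⟩) := by
          congr 1
          apply Fin.ext
          rw [finRotate_pow_val]
          simp [Nat.mod_eq_of_lt (v ⟨0, hn⟩).isLt]
      _ = v (((finRotate n) ^ (x : ℕ)) ⟨0, hn⟩) := (hcomm _ _).symm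
      _ = v x := by rw [hx]
  right_inv k := by
    show ((finRotate n) ^ ((k : Fin n) : ℕ)) ⟨0, hn⟩ = k
    apply Fin.ext
    rw [finRotate_pow_val]
    simp [Nat.mod_eq_of_lt k.isLt]


attribute [local instance] Classical.propDecidable

/-- Restriction of a fiber-preserving permutation of a sigma type to one fiber. -/
noncomputable def restrictPerm {q : ℕ} (n : Fin q → ℕ) (v : Equiv.Perm (Σ i, Fin (n i)))
    (hv : ∀ x, (v x).1 = x.1) (i : Fin q) : Equiv.Perm (Fin (n i)) :=
  Equiv.ofBijective (fun k => Fin.cast (congrArg n (hv ⟨i, k⟩)) (v ⟨i, k⟩).2)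
    ((Fintype.bijective_iff_injective_and_card _).mpr ⟨by
      intro k k' h
      have hvv : v ⟨i, k⟩ = v ⟨i, k'⟩ := by
        apply sigma_fin_ext ((hv ⟨i, k⟩).trans (hv ⟨i, k'⟩).symm)
        simpa using congrArg Fin.val h
      have h2 := (Sigma.mk.inj_iff.mp (v.injective hvv)).2
      exact eq_of_heq h2, rfl⟩)

lemma restrictPerm_val {q : ℕ} (n : Fin q → ℕ) (v : Equiv.Perm (Σ i, Fin (n i)))
    (hv : ∀ x, (v x).1 = x.1) (i : Fin q) (k : Fin (n i)) :
    ((restrictPerm n v hv i) k : ℕ) = ((v ⟨i, k⟩).2 : ℕ) := rfl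

/-- Fiber-preserving permutations commuting with blockwise rotation, as a product. -/
noncomputable def blockPermEquiv {q : ℕ} (n : Fin q → ℕ) :
    {v : Equiv.Perm (Σ i, Fin (n i)) //
      (∀ x, v ((Equiv.sigmaCongrRight fun i => finRotate (n i)) x)
            = (Equiv.sigmaCongrRight fun i => finRotate (n i)) (v x)) ∧ ∀ x, (v x).1 = x.1}
    ≃ Π i, {vi : Equiv.Perm (Fin (n i)) //
        ∀ k, vi (finRotate (n i) k) = finRotate (n i) (vi k)} where
  toFun v := fun i => ⟨restrictPerm n v.1 v.2.2 i, by
    intro k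
    apply Fin.ext
    rw [restrictPerm_val]
    have h2 := v.2.1 ⟨i, k⟩
    have h1 : (Equiv.sigmaCongrRight fun i => finRotate (n i)) ⟨i, k⟩
        = ⟨i, finRotate (n i) k⟩ := rfl
    rw [h1] at h2
    rw [h2]
    show ((finRotate (n (v.1 ⟨i, k⟩).1)) (v.1 ⟨i, k⟩).2 : ℕ) = _
    rw [finRotate_apply_val, finRotate_apply_val, restrictPerm_val]
    exact congrArg (fun m => (((v.1 ⟨i, k⟩).snd : ℕ) + 1) % m) (congrArg n (v.2.2 ⟨i, k⟩))⟩
  invFun g := ⟨Equiv.sigmaCongrRight (fun i => (g i).1), by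
    constructor
    · rintro ⟨i, k⟩
      show (⟨i, (g i).1 (finRotate (n i) k)⟩ : Σ i, Fin (n i)) = ⟨i, finRotate (n i) ((g i).1 k)⟩
      rw [(g i).2 k]
    · rintro ⟨i, k⟩
      rfl⟩
  left_inv v := by
    apply Subtype.ext
    apply Equiv.ext
    rintro ⟨i, k⟩
    apply sigma_fin_ext
    · exact (v.2.2 ⟨i, k⟩).symm
    · exact restrictPerm_val n v.1 v.2.2 i k
  right_inv g := by
    funext i
    apply Subtype.ext
    apply Equiv.ext
    intro k
    apply Fin.ext
    rw [restrictPerm_val]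
    rfl

/-- The stabilizer-type subgroup attached to a composition. -/
def ZC (c : Composition N) : Type :=
  {u : Equiv.Perm (Fin N) //
    (∀ j, u (crho c j) = crho c (u j)) ∧ ∀ j, cidx c (u j) = cidx c j}

noncomputable instance (c : Composition N) : Fintype (ZC c) := by
  unfold ZC; infer_instance

lemma crho_symm_apply' (c : Composition N) (j : Fin N) :
    c.blocksFinEquiv.symm (crho c j) =
      (Equiv.sigmaCongrRight fun i => finRotate (c.blocksFun i)) (c.blocksFinEquiv.symm j) := by
  conv_lhs => rw [← Equiv.apply_symm_apply c.blocksFinEquiv j, crho_apply]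
  simp

lemma crho_apply' (c : Composition N) (s : Σ i : Fin c.length, Fin (c.blocksFun i)) :
    crho c (c.blocksFinEquiv s) =
      c.blocksFinEquiv ((Equiv.sigmaCongrRight fun i => finRotate (c.blocksFun i)) s) :=
  crho_apply c s

/-- Conjugating `ZC c` to the sigma-type model. -/
noncomputable def conjEquiv (c : Composition N) :
    ZC c ≃ {v : Equiv.Perm (Σ i : Fin c.length, Fin (c.blocksFun i)) //
      (∀ x, v ((Equiv.sigmaCongrRight fun i => finRotate (c.blocksFun i)) x)
            = (Equiv.sigmaCongrRight fun i => finRotate (c.blocksFun i)) (v x))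
      ∧ ∀ x, (v x).1 = x.1} where
  toFun u := ⟨(c.blocksFinEquiv.trans u.1).trans c.blocksFinEquiv.symm, by
    constructor
    · intro x
      show c.blocksFinEquiv.symm (u.1 (c.blocksFinEquiv
          ((Equiv.sigmaCongrRight fun i => finRotate (c.blocksFun i)) x))) = _
      rw [← crho_apply', u.2.1]
      exact crho_symm_apply' c _
    · intro x
      show (c.blocksFinEquiv.symm (u.1 (c.blocksFinEquiv x))).1 = x.1
      have := u.2.2 (c.blocksFinEquiv x)
      simp only [cidx, Equiv.symm_apply_apply] at this
      exact this⟩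
  invFun v := ⟨(c.blocksFinEquiv.symm.trans v.1).trans c.blocksFinEquiv, by
    constructor
    · intro j
      show c.blocksFinEquiv (v.1 (c.blocksFinEquiv.symm (crho c j)))
          = crho c (c.blocksFinEquiv (v.1 (c.blocksFinEquiv.symm j)))
      rw [crho_symm_apply', v.2.1, crho_apply']
    · intro j
      show cidx c (c.blocksFinEquiv (v.1 (c.blocksFinEquiv.symm j))) = cidx c j
      simp only [cidx, Equiv.symm_apply_apply]
      exact v.2.2 _⟩
  left_inv u := by
    apply Subtype.ext
    apply Equiv.ext
    intro j
    simp
  right_inv v := by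
    apply Subtype.ext
    apply Equiv.ext
    intro x
    simp

lemma ZC_card (c : Composition N) : Fintype.card (ZC c) = ∏ i, c.blocksFun i := by
  have hpos : ∀ i : Fin c.length, 0 < c.blocksFun i :=
    fun i => Nat.lt_of_lt_of_le Nat.zero_lt_one (c.one_le_blocksFun i)
  have e := (conjEquiv c).trans ((blockPermEquiv fun i => c.blocksFun i).trans
    (Equiv.piCongrRight fun i => rotCentEquiv (c.blocksFun i) (hpos i)))
  rw [Fintype.card_congr e, Fintype.card_pi]
  simp

variable {p : ℕ}

/-- The decomposition map: a word `w` gives a permutation with labelled orbits. -/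
def Fmap (c : Composition N) (hc : c.length = p) (w : Equiv.Perm (Fin N)) :
    Equiv.Perm (Fin N) × (Fin N → Fin p) :=
  (w * crho c * w⁻¹, fun x => Fin.cast hc (cidx c (w⁻¹ x)))

/-- A labelled permutation: the fibers of the labels are exactly the orbits. -/
def Good (y : Equiv.Perm (Fin N) × (Fin N → Fin p)) : Prop :=
  (∀ x, y.2 (y.1 x) = y.2 x) ∧
  (∀ x x', y.2 x = y.2 x' → x' ∈ MulAction.orbit (Subgroup.zpowers y.1) x) ∧
  Function.Surjective y.2

lemma Fmap_eq_iff (c : Composition N) (hc : c.length = p) (w w₀ : Equiv.Perm (Fin N)) :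
    Fmap c hc w = Fmap c hc w₀ ↔
      ((∀ j, (w₀⁻¹ * w) (crho c j) = crho c ((w₀⁻¹ * w) j)) ∧
       ∀ j, cidx c ((w₀⁻¹ * w) j) = cidx c j) := by
  rw [Fmap, Fmap, Prod.ext_iff]
  constructor
  · rintro ⟨h1, h2⟩
    dsimp only at h1 h2
    have h3 : (w₀⁻¹ * w) * crho c = crho c * (w₀⁻¹ * w) := by
      calc (w₀⁻¹ * w) * crho c = w₀⁻¹ * (w * crho c * w⁻¹) * w := by group
      _ = w₀⁻¹ * (w₀ * crho c * w₀⁻¹) * w := by rw [h1]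
      _ = crho c * (w₀⁻¹ * w) := by group
    constructor
    · intro j
      rw [← Equiv.Perm.mul_apply, h3, Equiv.Perm.mul_apply]
    · intro j
      have h4 := congrFun h2 (w j)
      simp only [Equiv.Perm.inv_apply_self] at h4
      exact (Fin.cast_injective hc h4).symm
  · rintro ⟨h1, h2⟩
    have h3 : (w₀⁻¹ * w) * crho c = crho c * (w₀⁻¹ * w) :=
      Equiv.ext fun j => by simpa [Equiv.Perm.mul_apply] using h1 j
    dsimp only
    constructor
    · calc w * crho c * w⁻¹ = w₀ * ((w₀⁻¹ * w) * crho c) * w⁻¹ := by group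
      _ = w₀ * (crho c * (w₀⁻¹ * w)) * w⁻¹ := by rw [h3]
      _ = w₀ * crho c * w₀⁻¹ := by group
    · funext x
      have h5 := h2 (w⁻¹ x)
      have h6 : (w₀⁻¹ * w) (w⁻¹ x) = w₀⁻¹ x := by
        simp [Equiv.Perm.mul_apply]
      rw [h6] at h5
      exact (congrArg (Fin.cast hc) h5).symm

/-- The fiber of `Fmap` over an image point is a coset of `ZC c`. -/
noncomputable def fiberEquiv (c : Composition N) (hc : c.length = p) (w₀ : Equiv.Perm (Fin N)) :
    {w : Equiv.Perm (Fin N) // Fmap c hc w = Fmap c hc w₀} ≃ ZC c where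
  toFun w := ⟨w₀⁻¹ * w.1, (Fmap_eq_iff c hc w.1 w₀).mp w.2⟩
  invFun u := ⟨w₀ * u.1, (Fmap_eq_iff c hc (w₀ * u.1) w₀).mpr (by
    rw [show w₀⁻¹ * (w₀ * u.1) = u.1 from by group]
    exact u.2)⟩
  left_inv w := Subtype.ext (by show w₀ * (w₀⁻¹ * w.1) = w.1; group)
  right_inv u := Subtype.ext (by show w₀⁻¹ * (w₀ * u.1) = u.1; group)

lemma image_card (c : Composition N) (hc : c.length = p) :
    (univ.image (Fmap c hc)).card * ∏ i, c.blocksFun i = N.factorial := by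
  have hcard : (univ : Finset (Equiv.Perm (Fin N))).card = N.factorial := by
    rw [Finset.card_univ, Fintype.card_perm, Fintype.card_fin]
  have h1 : (univ : Finset (Equiv.Perm (Fin N))).card
      = ∑ y ∈ univ.image (Fmap c hc), (univ.filter fun w => Fmap c hc w = y).card :=
    Finset.card_eq_sum_card_fiberwise (fun w _ => mem_image_of_mem _ (mem_univ w))
  have h2 : ∀ y ∈ univ.image (Fmap c hc),
      (univ.filter fun w => Fmap c hc w = y).card = ∏ i, c.blocksFun i := by
    intro y hy
    obtain ⟨w₀, _, rfl⟩ := mem_image.mp hy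
    rw [← Fintype.card_subtype, Fintype.card_congr (fiberEquiv c hc w₀), ZC_card]
  calc (univ.image (Fmap c hc)).card * ∏ i, c.blocksFun i
      = ∑ _y ∈ univ.image (Fmap c hc), ∏ i, c.blocksFun i := by
        rw [Finset.sum_const, smul_eq_mul]
    _ = ∑ y ∈ univ.image (Fmap c hc), (univ.filter fun w => Fmap c hc w = y).card :=
        (Finset.sum_congr rfl h2).symm
    _ = (univ : Finset (Equiv.Perm (Fin N))).card := h1.symm
    _ = N.factorial := hcard

/-- The fiber of a sigma type over a base point. -/
def sigmaFiberFin {q : ℕ} (n : Fin q → ℕ) (i₀ : Fin q) :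
    {s : Σ i, Fin (n i) // s.1 = i₀} ≃ Fin (n i₀) where
  toFun s := Fin.cast (congrArg n s.2) s.1.2
  invFun k := ⟨⟨i₀, k⟩, rfl⟩
  left_inv := by rintro ⟨⟨i, k⟩, h⟩; dsimp only at h; subst h; rfl
  right_inv k := rfl

lemma good_Fmap (c : Composition N) (hc : c.length = p) (w : Equiv.Perm (Fin N)) :
    Good (Fmap c hc w) := by
  refine ⟨?_, ?_, ?_⟩
  · intro x
    show Fin.cast hc (cidx c (w⁻¹ ((w * crho c * w⁻¹) x))) = Fin.cast hc (cidx c (w⁻¹ x))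
    congr 1
    have h : w⁻¹ ((w * crho c * w⁻¹) x) = crho c (w⁻¹ x) := by
      simp [Equiv.Perm.mul_apply]
    rw [h, cidx_crho]
  · intro x x' h
    have hidx : cidx c (w⁻¹ x) = cidx c (w⁻¹ x') := Fin.cast_injective hc h
    set s := c.blocksFinEquiv.symm (w⁻¹ x) with hs
    set s' := c.blocksFinEquiv.symm (w⁻¹ x') with hs'
    have hss : s.1 = s'.1 := hidx
    obtain ⟨m, hm⟩ := finRotate_exists_pow s.2 (Fin.cast (congrArg _ hss.symm) s'.2)
    have hx' : ((w * crho c * w⁻¹) ^ m) x = x' := by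
      rw [conj_pow]
      show w ((crho c ^ m) (w⁻¹ x)) = x'
      have hxe : w⁻¹ x = c.blocksFinEquiv s := (Equiv.apply_symm_apply _ _).symm
      rw [hxe, crho_pow_apply]
      have hs2 : (⟨s.1, ((finRotate _) ^ m) s.2⟩ : Σ i : Fin c.length, Fin (c.blocksFun i)) = s' :=
        sigma_fin_ext hss (by rw [hm]; simp)
      rw [hs2]
      show w (c.blocksFinEquiv (c.blocksFinEquiv.symm (w⁻¹ x'))) = x'
      simp
    exact ⟨⟨(w * crho c * w⁻¹) ^ m, Subgroup.pow_mem _ (Subgroup.mem_zpowers _) m⟩, hx'⟩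
  · intro i
    have hpos : 0 < c.blocksFun (Fin.cast hc.symm i) :=
      lt_of_lt_of_le one_pos (c.one_le_blocksFun _)
    refine ⟨w (c.blocksFinEquiv ⟨Fin.cast hc.symm i, ⟨0, hpos⟩⟩), ?_⟩
    show Fin.cast hc (cidx c (w⁻¹ (w _))) = i
    rw [Equiv.Perm.inv_apply_self]
    simp [cidx]

lemma Fmap_fiber_card (c : Composition N) (hc : c.length = p) (w : Equiv.Perm (Fin N))
    (i : Fin p) :
    (univ.filter fun x => (Fmap c hc w).2 x = i).card = c.blocksFun (Fin.cast hc.symm i) := by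
  rw [← Fintype.card_subtype]
  have e1 : {x // (Fmap c hc w).2 x = i} ≃ {j // Fin.cast hc (cidx c j) = i} :=
    Equiv.subtypeEquiv w.symm (fun x => Iff.rfl)
  have e2 : {j // Fin.cast hc (cidx c j) = i}
      ≃ {s : Σ i' : Fin c.length, Fin (c.blocksFun i') // Fin.cast hc s.1 = i} :=
    Equiv.subtypeEquiv c.blocksFinEquiv.symm (fun j => Iff.rfl)
  have e3 : {s : Σ i' : Fin c.length, Fin (c.blocksFun i') // Fin.cast hc s.1 = i}
      ≃ {s : Σ i' : Fin c.length, Fin (c.blocksFun i') // s.1 = Fin.cast hc.symm i} :=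
    Equiv.subtypeEquivRight fun s => by
      constructor <;> intro h <;>
        · apply Fin.ext
          simpa using congrArg Fin.val h
  rw [Fintype.card_congr (((e1.trans e2).trans e3).trans (sigmaFiberFin _ _)), Fintype.card_fin]

lemma comp_eq_of_Fmap_eq {c c' : Composition N} {hc : c.length = p} {hc' : c'.length = p}
    {w w' : Equiv.Perm (Fin N)} (h : Fmap c hc w = Fmap c' hc' w') : c = c' := by
  have hb : ∀ i : Fin p, c.blocksFun (Fin.cast hc.symm i) = c'.blocksFun (Fin.cast hc'.symm i) := by
    intro i
    rw [← Fmap_fiber_card c hc w i, ← Fmap_fiber_card c' hc' w' i, h]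
  apply Composition.ext
  apply List.ext_getElem
  · show c.length = c'.length
    rw [hc, hc']
  · intro n h1 h2
    have := hb ⟨n, by rw [← hc]; exact h1⟩
    simpa [Composition.blocksFun, Fin.cast, List.get_eq_getElem] using this

lemma good_surj {σ : Equiv.Perm (Fin N)} {t : Fin N → Fin p} (hg : Good (σ, t)) :
    ∃ (c : Composition N) (hc : c.length = p) (w : Equiv.Perm (Fin N)),
      Fmap c hc w = (σ, t) := by
  obtain ⟨h1, h2, h3⟩ := hg
  dsimp only at h1 h2 h3
  set n : Fin p → ℕ := fun i => (univ.filter fun x => t x = i).card with hn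
  have hpos : ∀ i, 0 < n i := by
    intro i
    obtain ⟨x, hx⟩ := h3 i
    exact Finset.card_pos.mpr ⟨x, by simp [hx]⟩
  have hsum : ∑ i, n i = N := by
    simp only [hn]
    rw [← Finset.card_eq_sum_card_fiberwise (f := t) (s := univ) (t := univ)
      (fun x _ => mem_univ (t x)), Finset.card_univ, Fintype.card_fin]
  have hblocks_pos : ∀ {k : ℕ}, k ∈ List.ofFn n → 0 < k := by
    intro k hk
    rw [List.mem_ofFn] at hk
    obtain ⟨j, rfl⟩ := hk
    exact hpos j
  have hblocks_sum : (List.ofFn n).sum = N := by rw [List.sum_ofFn]; exact hsum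
  set c : Composition N := ⟨List.ofFn n, hblocks_pos, hblocks_sum⟩ with hcdef
  have hc : c.length = p := by simp [hcdef, Composition.length]
  have hbf : ∀ i : Fin c.length, c.blocksFun i = n (Fin.cast hc i) := by
    intro i
    show (List.ofFn n).get i = _
    rw [List.get_ofFn]
  have hne : ∀ i : Fin p, (univ.filter fun x => t x = i).Nonempty :=
    fun i => Finset.card_pos.mp (hpos i)
  set b : Fin p → Fin N := fun i => (univ.filter fun x => t x = i).min' (hne i) with hbdef
  have htb : ∀ i, t (b i) = i := by
    intro i
    have := Finset.min'_mem _ (hne i)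
    simp only [Finset.mem_filter] at this
    exact this.2
  have hpow : ∀ (m : ℕ) (x : Fin N), t ((σ ^ m) x) = t x := fun m x =>
    zpowers_inv h1 (Subgroup.pow_mem _ (Subgroup.mem_zpowers σ) m) x
  have horb : ∀ i : Fin p, {x : Fin N | t x = i} = MulAction.orbit (Subgroup.zpowers σ) (b i) := by
    intro i
    ext x
    constructor
    · intro hx
      exact h2 (b i) x (by rw [htb i]; exact hx.symm)
    · rintro ⟨g, rfl⟩
      show t ((g : Equiv.Perm (Fin N)) (b i)) = i
      rw [zpowers_inv h1 g.2 (b i), htb]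
  have hmp : ∀ i : Fin p, n i = Function.minimalPeriod (⇑σ) (b i) := by
    intro i
    have e1 : n i = Nat.card {x : Fin N // t x = i} := by
      rw [Nat.card_eq_fintype_card, Fintype.card_subtype]
    have e2 : Nat.card {x : Fin N // t x = i}
        = Nat.card (MulAction.orbit (Subgroup.zpowers σ) (b i)) := by
      apply Nat.card_congr
      exact Equiv.subtypeEquivRight fun x => by
        rw [show (t x = i) ↔ x ∈ {x : Fin N | t x = i} from Iff.rfl, horb i]
    have e3 : Nat.card (MulAction.orbit (Subgroup.zpowers σ) (b i))
        = Function.minimalPeriod (fun x => σ • x) (b i) := by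
      rw [Nat.card_congr (MulAction.orbitZPowersEquiv σ (b i)), Nat.card_zmod]
    have e4 : (fun x => σ • x) = ⇑σ := funext fun x => rfl
    rw [e1, e2, e3, e4]
  have hNcard : Fintype.card (Σ i : Fin c.length, Fin (c.blocksFun i)) = Fintype.card (Fin N) := by
    rw [Fintype.card_sigma, Fintype.card_fin]
    calc ∑ i : Fin c.length, Fintype.card (Fin (c.blocksFun i))
        = ∑ i : Fin c.length, n (Fin.cast hc i) :=
          Finset.sum_congr rfl fun i _ => by rw [Fintype.card_fin, hbf]
      _ = ∑ i : Fin p, n i := Fintype.sum_equiv (finCongr hc) _ _ (fun i => rfl)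
      _ = N := hsum
  set g : (Σ i : Fin c.length, Fin (c.blocksFun i)) → Fin N :=
    fun s => (σ ^ (s.2 : ℕ)) (b (Fin.cast hc s.1)) with hgdef
  have htg : ∀ s, t (g s) = Fin.cast hc s.1 := by
    intro s
    simp only [hgdef]
    rw [hpow, htb]
  have hginj : Function.Injective g := by
    rintro ⟨i, k⟩ ⟨i', k'⟩ hgg
    have hii : (Fin.cast hc i : Fin p) = Fin.cast hc i' := by
      rw [← htg ⟨i, k⟩, ← htg ⟨i', k'⟩, hgg]
    have hii' : i = i' := by
      apply Fin.ext
      simpa using congrArg Fin.val hii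
    subst hii'
    refine sigma_fin_ext rfl ?_
    have hk : (k : ℕ) ∈ Set.Iio (Function.minimalPeriod (⇑σ) (b (Fin.cast hc i))) := by
      rw [Set.mem_Iio, ← hmp]
      exact lt_of_lt_of_le k.isLt (le_of_eq (hbf i))
    have hk' : (k' : ℕ) ∈ Set.Iio (Function.minimalPeriod (⇑σ) (b (Fin.cast hc i))) := by
      rw [Set.mem_Iio, ← hmp]
      exact lt_of_lt_of_le k'.isLt (le_of_eq (hbf i))
    have hit : (⇑σ)^[(k : ℕ)] (b (Fin.cast hc i)) = (⇑σ)^[(k' : ℕ)] (b (Fin.cast hc i)) := by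
      rw [Equiv.Perm.iterate_eq_pow, Equiv.Perm.iterate_eq_pow]
      exact hgg
    exact Function.iterate_injOn_Iio_minimalPeriod hk hk' hit
  set w : Equiv.Perm (Fin N) := c.blocksFinEquiv.symm.trans
    (Equiv.ofBijective g ((Fintype.bijective_iff_injective_and_card g).mpr
      ⟨hginj, hNcard⟩)) with hwdef
  have hw : ∀ s, w (c.blocksFinEquiv s) = g s := by
    intro s
    simp only [hwdef, Equiv.trans_apply, Equiv.symm_apply_apply, Equiv.ofBijective_apply]
  have hws : ∀ x, x = g (c.blocksFinEquiv.symm (w⁻¹ x)) := by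
    intro x
    have h := hw (c.blocksFinEquiv.symm (w⁻¹ x))
    rw [Equiv.apply_symm_apply] at h
    have h2' : w (w⁻¹ x) = x := Equiv.Perm.apply_inv_self w x
    rw [h2'] at h
    exact h
  refine ⟨c, hc, w, ?_⟩
  have hsnd : (fun x => Fin.cast hc (cidx c (w⁻¹ x))) = t := by
    funext x
    conv_rhs => rw [hws x, htg]
    rfl
  have hfst : w * crho c * w⁻¹ = σ := by
    apply Equiv.ext
    intro x
    show w (crho c (w⁻¹ x)) = σ x
    set s := c.blocksFinEquiv.symm (w⁻¹ x) with hsdef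
    have hxE : w⁻¹ x = c.blocksFinEquiv s := (Equiv.apply_symm_apply _ _).symm
    rw [hxE, crho_apply, hw]
    have hxg : σ x = σ ((σ ^ (s.2 : ℕ)) (b (Fin.cast hc s.1))) := by
      conv_lhs => rw [hws x]
    rw [hxg]
    simp only [hgdef]
    have hval : ((finRotate (c.blocksFun s.1)) s.2 : ℕ)
        = ((s.2 : ℕ) + 1) % (c.blocksFun s.1) := finRotate_apply_val _
    have hM : c.blocksFun s.1 = Function.minimalPeriod (⇑σ) (b (Fin.cast hc s.1)) :=
      (hbf s.1).trans (hmp _)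
    rw [hval]
    generalize (s.2 : ℕ) = k
    rw [hM]
    calc (σ ^ ((k + 1) % Function.minimalPeriod (⇑σ) (b (Fin.cast hc s.1))))
          (b (Fin.cast hc s.1))
        = (⇑σ)^[(k + 1) % Function.minimalPeriod (⇑σ) (b (Fin.cast hc s.1))]
          (b (Fin.cast hc s.1)) := by rw [Equiv.Perm.iterate_eq_pow]
      _ = (⇑σ)^[k + 1] (b (Fin.cast hc s.1)) := Function.iterate_mod_minimalPeriod_eq
      _ = (σ ^ (k + 1)) (b (Fin.cast hc s.1)) := by rw [Equiv.Perm.iterate_eq_pow]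
      _ = σ ((σ ^ k) (b (Fin.cast hc s.1))) := by rw [pow_succ', Equiv.Perm.mul_apply]
  exact Prod.ext hfst hsnd

/-- Good labellings of `σ` are exactly bijective labelings of its orbit space. -/
noncomputable def goodEquiv (σ : Equiv.Perm (Fin N)) :
    {t : Fin N → Fin p // Good (σ, t)}
      ≃ (MulAction.orbitRel.Quotient (Subgroup.zpowers σ) (Fin N) ≃ Fin p) where
  toFun tg := Equiv.ofBijective
    (Quotient.lift tg.1 (fun a b hab => by
      obtain ⟨g, rfl⟩ := hab
      exact zpowers_inv tg.2.1 g.2 b))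
    ⟨fun q q' => Quotient.inductionOn₂' q q' (fun a b h =>
        (Quotient.sound' (tg.2.2.1 a b h)).symm),
     fun i => by
      obtain ⟨x, hx⟩ := tg.2.2.2 i
      exact ⟨Quotient.mk'' x, hx⟩⟩
  invFun e := ⟨fun x => e (Quotient.mk'' x), by
    refine ⟨fun x => ?_, fun x x' he => ?_, fun i => ?_⟩
    · exact congrArg e (Quotient.sound' ⟨⟨σ, Subgroup.mem_zpowers σ⟩, rfl⟩)
    · obtain ⟨g, hg⟩ := Quotient.exact' (e.injective he)
      refine ⟨g⁻¹, ?_⟩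
      simp only at hg
      show g⁻¹ • x = x'
      rw [← hg, inv_smul_smul]
    · obtain ⟨x, hx⟩ := Quot.exists_rep (e.symm i)
      refine ⟨x, ?_⟩
      have h := e.apply_symm_apply i
      rw [← hx] at h
      exact h⟩
  left_inv tg := Subtype.ext rfl
  right_inv e := Equiv.ext fun q => Quotient.inductionOn' q fun x => rfl

lemma card_good_t (σ : Equiv.Perm (Fin N)) :
    Fintype.card {t : Fin N → Fin p // Good (σ, t)}
      = if permOrbitCount σ = p then p.factorial else 0 := by
  rw [Fintype.card_congr (goodEquiv σ)]
  by_cases h : permOrbitCount σ = p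
  · rw [if_pos h]
    have hcard : Fintype.card (MulAction.orbitRel.Quotient (Subgroup.zpowers σ) (Fin N)) = p := by
      rw [← Nat.card_eq_fintype_card]
      exact h
    rw [Fintype.card_equiv (Fintype.equivFinOfCardEq hcard), hcard]
  · rw [if_neg h, Fintype.card_eq_zero_iff]
    refine ⟨fun e => h ?_⟩
    rw [permOrbitCount, Nat.card_eq_fintype_card]
    exact (Fintype.card_congr e).trans (Fintype.card_fin p)

lemma good_count :
    (univ.filter (Good (N := N) (p := p))).card
      = p.factorial * Fintype.card {σ : Equiv.Perm (Fin N) // permOrbitCount σ = p} := by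
  rw [← Fintype.card_subtype]
  have e : {y : Equiv.Perm (Fin N) × (Fin N → Fin p) // Good y}
      ≃ Σ σ : Equiv.Perm (Fin N), {t : Fin N → Fin p // Good (σ, t)} :=
    { toFun := fun y => ⟨y.1.1, y.1.2, y.2⟩
      invFun := fun s => ⟨(s.1, s.2.1), s.2.2⟩
      left_inv := fun y => Subtype.ext Prod.mk.eta
      right_inv := fun s => rfl }
  rw [Fintype.card_congr e, Fintype.card_sigma]
  rw [Finset.sum_congr rfl (fun σ _ => card_good_t σ)]
  rw [← Finset.sum_filter, Finset.sum_const, smul_eq_mul, Fintype.card_subtype, mul_comm]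

lemma sum_image_card :
    ∑ c : {c : Composition N // c.length = p}, (univ.image (Fmap c.1 c.2)).card
      = (univ.filter (Good (N := N) (p := p))).card := by
  rw [← Finset.card_biUnion]
  · congr 1
    ext y
    simp only [Finset.mem_biUnion, Finset.mem_univ, true_and, Finset.mem_image,
      Finset.mem_filter]
    constructor
    · rintro ⟨c, w, rfl⟩
      exact good_Fmap c.1 c.2 w
    · intro hg
      have hg' : Good (y.1, y.2) := hg
      obtain ⟨c, hc, w, hw⟩ := good_surj hg'
      refine ⟨⟨c, hc⟩, w, ?_⟩
      rw [hw, Prod.mk.eta]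
  · intro c _ c' _ hne
    rw [Function.onFun, Finset.disjoint_left]
    intro y hy hy'
    obtain ⟨w, -, rfl⟩ := Finset.mem_image.mp hy
    obtain ⟨w', -, hww⟩ := Finset.mem_image.mp hy'

    exact hne (Subtype.ext (comp_eq_of_Fmap_eq hww).symm)
end StirlingFirst

/-- `(1/p!) Σ_{compositions (n₁,…,n_p) of N} Π_l 1/n_l = c(N,p)/N!` where `c(N,p)` is the
number of permutations of an `N`-element set with exactly `p` orbits. -/


theorem stmt_10 (N p : ℕ) (hN : 1 ≤ N) (hp1 : 1 ≤ p) (hpN : p ≤ N) :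
    (1 / (p.factorial : ℚ)) * ∑ c : {c : Composition N // c.length = p},
        ∏ i : Fin (c : Composition N).length, (1 : ℚ) / ((c : Composition N).blocksFun i : ℚ)
      = (Nat.card {σ : Equiv.Perm (Fin N) // permOrbitCount σ = p} : ℚ) /
        (N.factorial : ℚ) := by
  classical
  have hNf : (N.factorial : ℚ) ≠ 0 := Nat.cast_ne_zero.mpr (Nat.factorial_ne_zero N)
  have hpf : (p.factorial : ℚ) ≠ 0 := Nat.cast_ne_zero.mpr (Nat.factorial_ne_zero p)
  have hterm : ∀ c : {c : Composition N // c.length = p},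
      (∏ i : Fin (c : Composition N).length, (1 : ℚ) / ((c : Composition N).blocksFun i : ℚ))
        = ((univ.image (StirlingFirst.Fmap c.1 c.2)).card : ℚ) / (N.factorial : ℚ) := by
    intro c
    have hkey : ((univ.image (StirlingFirst.Fmap c.1 c.2)).card : ℚ)
        * (∏ i : Fin c.1.length, (c.1.blocksFun i : ℚ)) = (N.factorial : ℚ) := by
      exact_mod_cast congrArg (fun k : ℕ => (k : ℚ)) (StirlingFirst.image_card c.1 c.2)
    have hprodne : (∏ i : Fin c.1.length, ((c.1.blocksFun i : ℚ))) ≠ 0 :=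
      Finset.prod_ne_zero_iff.mpr fun i _ =>
        Nat.cast_ne_zero.mpr (Nat.one_le_iff_ne_zero.mp (c.1.one_le_blocksFun i))
    rw [show (∏ i : Fin (c : Composition N).length, (1 : ℚ) / ((c : Composition N).blocksFun i : ℚ))
        = (∏ i : Fin c.1.length, ((c.1.blocksFun i : ℚ)))⁻¹ by
      rw [← Finset.prod_inv_distrib]
      exact Finset.prod_congr rfl fun i _ => one_div _]
    rw [eq_div_iff hNf]
    field_simp
    linear_combination -hkey
  rw [Finset.sum_congr rfl fun c _ => hterm c, ← Finset.sum_div, ← Nat.cast_sum,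
    StirlingFirst.sum_image_card, StirlingFirst.good_count]
  rw [Nat.card_eq_fintype_card]
  push_cast
  field_simp
end
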